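/- arXiv:1001.0464 — 14 statements merged into one kernel-verified Lean document; each statement's English description precedes it below -/
import Mathlib

section
/- Let M be a nonsingular 3×3 complex matrix and s a nonzero vector in ℂ³ such that for every positive integer k, s is not an eigenvector of M^k (i.e., M^k s is not a complex scalar multiple of s). Let F₁, F₂, F₃ be 2×3 complex matrices, each of rank 2, such that the intersection of the row spaces of F₁, F₂, F₃ is the zero subspace. Then for every positive integer n there exists an index i ∈ {1,2,3} and a subset S ⊆ {Fᵢ M^k s : 0 ≤ k ≤ n³} with |S| ≥ n whose vectors are pairwise linearly independent over ℂ. -/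
open Matrix

/-- The row space of a 2×3 complex matrix: the ℂ-linear span of its rows in ℂ³. -/
noncomputable def rowSpace (F : Matrix (Fin 2) (Fin 3) ℂ) : Submodule ℂ (Fin 3 → ℂ) :=
  Submodule.span ℂ (Set.range fun i : Fin 2 => F i)

open Module
open scoped LinearAlgebra.Projectivization

lemma kernels_basis (F : Fin 3 → Matrix (Fin 2) (Fin 3) ℂ)
    (hrank : ∀ i, (F i).rank = 2)
    (hinter : rowSpace (F 0) ⊓ rowSpace (F 1) ⊓ rowSpace (F 2) = ⊥) :
    ∃ b : Basis (Fin 3) ℂ (Fin 3 → ℂ),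
      ∀ i : Fin 3, ∀ w : Fin 3 → ℂ, F i *ᵥ w = 0 → w ∈ Submodule.span ℂ {b i} := by
  classical
  set K : Fin 3 → Submodule ℂ (Fin 3 → ℂ) := fun i => LinearMap.ker (F i).mulVecLin with hK
  have hfr : finrank ℂ (Fin 3 → ℂ) = 3 := by simp
  have hKrank : ∀ i, finrank ℂ (K i) = 1 := by
    intro i
    have h1 := (F i).mulVecLin.finrank_range_add_finrank_ker
    have h2 : finrank ℂ (LinearMap.range (F i).mulVecLin) = 2 := hrank i
    show finrank ℂ (LinearMap.ker (F i).mulVecLin) = 1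
    omega
  -- generators of the kernels
  have hgen : ∀ i, ∃ e : Fin 3 → ℂ, e ≠ 0 ∧ K i = Submodule.span ℂ {e} := by
    intro i
    obtain ⟨e, heK, he0⟩ := Submodule.exists_mem_ne_zero_of_ne_bot (p := K i) (by
      intro h; have := hKrank i; rw [h] at this; simpa using this)
    refine ⟨e, he0, (Submodule.eq_of_le_of_finrank_le ?_ ?_).symm⟩
    · rwa [Submodule.span_le, Set.singleton_subset_iff]
    · rw [hKrank i, finrank_span_singleton he0]
  choose e he0 hKe using hgen
  have heK : ∀ i, e i ∈ K i := fun i => by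
    rw [hKe i]; exact Submodule.mem_span_singleton_self _
  -- row space is the "orthogonal" of the kernel
  have hrowrank : ∀ i, finrank ℂ (rowSpace (F i)) = 2 := by
    intro i
    have := (F i).rank_eq_finrank_span_row
    rw [hrank i] at this
    exact this.symm
  -- the dot-product functional against e i
  have hpsi : ∀ i, ∃ ψ : (Fin 3 → ℂ) →ₗ[ℂ] ℂ, (∀ x, ψ x = x ⬝ᵥ e i) := by
    intro i
    exact ⟨{ toFun := fun x => x ⬝ᵥ e i,
             map_add' := fun x y => add_dotProduct x y (e i),
             map_smul' := fun c x => smul_dotProduct c x (e i) }, fun _ => rfl⟩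
  choose ψ hψ using hpsi
  have hψrange : ∀ i, finrank ℂ (LinearMap.range (ψ i)) = 1 := by
    intro i
    have hne : LinearMap.range (ψ i) ≠ ⊥ := by
      obtain ⟨m, hm⟩ : ∃ m, e i m ≠ 0 := by
        by_contra h; push_neg at h; exact he0 i (funext h)
      intro hbot
      have : ψ i (Pi.single m 1) = 0 := by
        have := LinearMap.mem_range_self (ψ i) (Pi.single m 1)
        rw [hbot] at this; simpa using this
      rw [hψ i] at this
      simp [single_dotProduct] at this
      exact hm this
    have h1 : finrank ℂ (LinearMap.range (ψ i)) ≤ 1 := by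
      simpa using Submodule.finrank_le (LinearMap.range (ψ i))
    have h2 : finrank ℂ (LinearMap.range (ψ i)) ≠ 0 := fun h =>
      hne (Submodule.finrank_eq_zero.mp h)
    omega
  have hroweq : ∀ i, rowSpace (F i) = LinearMap.ker (ψ i) := by
    intro i
    apply Submodule.eq_of_le_of_finrank_le
    · rw [rowSpace, Submodule.span_le]
      rintro x ⟨r, rfl⟩
      simp only [SetLike.mem_coe, LinearMap.mem_ker, hψ i]
      have hker : (F i) *ᵥ (e i) = 0 := heK i
      exact congrFun hker r
    · have h3 := (ψ i).finrank_range_add_finrank_ker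
      rw [hψrange i, hfr] at h3
      rw [hrowrank i]
      omega
  have hsum : K 0 ⊔ K 1 ⊔ K 2 = ⊤ := by
    by_contra hW
    obtain ⟨φ, hφW, hφ0⟩ := Submodule.exists_mem_ne_zero_of_ne_bot
      (p := (K 0 ⊔ K 1 ⊔ K 2).dualAnnihilator) (fun h => hW
        (Subspace.dualAnnihilator_inj.mp (by rw [h, Submodule.dualAnnihilator_top])))
    rw [Submodule.mem_dualAnnihilator] at hφW
    set v : Fin 3 → ℂ := fun m => φ (Pi.single m 1) with hvdef
    have hsingle : ∀ (x : Fin 3 → ℂ) m, (Pi.single m (x m) : Fin 3 → ℂ) = x m • (Pi.single m (1:ℂ) : Fin 3 → ℂ) := by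
      intro x m; ext j
      rcases eq_or_ne m j with rfl | hj
      · simp
      · simp [Pi.single_eq_of_ne (Ne.symm hj)]
    have hφv : ∀ x, φ x = x ⬝ᵥ v := by
      intro x
      conv_lhs => rw [(Finset.univ_sum_single x).symm]
      rw [map_sum]
      have : ∀ m ∈ Finset.univ, φ (Pi.single m (x m)) = x m * v m := by
        intro m _
        rw [hsingle x m, _root_.map_smul, smul_eq_mul]
      rw [Finset.sum_congr rfl this]
      rfl
    have hv0 : v ≠ 0 := by
      intro h
      apply hφ0
      apply LinearMap.ext
      intro x
      rw [hφv x, h]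
      simp
    have hvrow : ∀ i, v ∈ rowSpace (F i) := by
      intro i
      rw [hroweq i, LinearMap.mem_ker, hψ i, dotProduct_comm, ← hφv]
      apply hφW
      have hKle : ∀ i, K i ≤ K 0 ⊔ K 1 ⊔ K 2 := by
        intro i
        fin_cases i
        · exact le_sup_of_le_left le_sup_left
        · exact le_sup_of_le_left le_sup_right
        · exact le_sup_right
      exact hKle i (heK i)
    have : v ∈ rowSpace (F 0) ⊓ rowSpace (F 1) ⊓ rowSpace (F 2) :=
      Submodule.mem_inf.mpr ⟨Submodule.mem_inf.mpr ⟨hvrow 0, hvrow 1⟩, hvrow 2⟩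
    rw [hinter] at this
    exact hv0 this
  have htop : ⊤ ≤ Submodule.span ℂ (Set.range e) := by
    rw [← hsum]
    have hle : ∀ i, K i ≤ Submodule.span ℂ (Set.range e) := fun i => by
      rw [hKe i]; exact Submodule.span_mono (Set.singleton_subset_iff.mpr ⟨i, rfl⟩)
    exact sup_le (sup_le (hle 0) (hle 1)) (hle 2)
  have hcard : Fintype.card (Fin 3) = finrank ℂ (Fin 3 → ℂ) := by simp
  refine ⟨basisOfTopLeSpanOfCardEqFinrank e htop hcard, fun i w hw => ?_⟩
  have hb : (basisOfTopLeSpanOfCardEqFinrank e htop hcard) i = e i := by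
    rw [coe_basisOfTopLeSpanOfCardEqFinrank]
  rw [hb, ← hKe i]
  exact hw

lemma pair_indep {u v : Fin 2 → ℂ} (hu : u ≠ 0) (hv : v ≠ 0)
    (h : Projectivization.mk ℂ u hu ≠ Projectivization.mk ℂ v hv) :
    LinearIndependent ℂ ![u, v] := by
  rw [LinearIndependent.pair_iff' hu]
  intro a ha
  have ha0 : a ≠ 0 := by rintro rfl; simp at ha; exact hv ha.symm
  exact h (((Projectivization.mk_eq_mk_iff' ℂ u v hu hv).2
    ⟨a⁻¹, by rw [← ha, smul_smul, inv_mul_cancel₀ ha0, one_smul]⟩))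

lemma coord_lemma {a u : Fin 3 → ℂ} (hu : ∃ m, u m ≠ 0) (c : Fin 3 → ℂ)
    (h : ∀ i m : Fin 3, m ≠ i → a m = c i * u m) : ∃ l : ℂ, ∀ m, a m = l * u m := by
  obtain ⟨m0, hm0⟩ := hu
  refine ⟨a m0 / u m0, fun m => ?_⟩
  rcases eq_or_ne m m0 with rfl | hne
  · field_simp
  · have hex : ∀ m m0 : Fin 3, m ≠ m0 → ∃ i : Fin 3, i ≠ m ∧ i ≠ m0 := by decide
    obtain ⟨i, him, him0⟩ := hex m m0 hne
    have h1 := h i m (Ne.symm him)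
    have h2 := h i m0 (Ne.symm him0)
    have hc : c i = a m0 / u m0 := by
      rw [h2, mul_div_cancel_right₀ _ hm0]
    rw [h1, hc]

theorem stmt_0 (M : Matrix (Fin 3) (Fin 3) ℂ) (hM : M.det ≠ 0)
    (s : Fin 3 → ℂ) (hs : s ≠ 0)
    (hev : ∀ k : ℕ, 1 ≤ k → ¬ ∃ c : ℂ, (M ^ k) *ᵥ s = c • s)
    (F : Fin 3 → Matrix (Fin 2) (Fin 3) ℂ)
    (hrank : ∀ i, (F i).rank = 2)
    (hinter : rowSpace (F 0) ⊓ rowSpace (F 1) ⊓ rowSpace (F 2) = ⊥) :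
    ∀ n : ℕ, 1 ≤ n →
      ∃ i : Fin 3, ∃ S : Finset (Fin 2 → ℂ),
        (↑S ⊆ {v : Fin 2 → ℂ | ∃ k : ℕ, k ≤ n ^ 3 ∧ v = (F i) *ᵥ ((M ^ k) *ᵥ s)}) ∧
        n ≤ S.card ∧
        (∀ u ∈ S, ∀ v ∈ S, u ≠ v → LinearIndependent ℂ ![u, v]) := by
  classical
  intro n hn
  by_contra hcon
  push_neg at hcon
  obtain ⟨b, hb⟩ := kernels_basis F hrank hinter
  set vv : ℕ → Fin 3 → ℂ := fun k => (M ^ k) *ᵥ s with hvv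
  have hinj : ∀ (k : ℕ) (x y : Fin 3 → ℂ), (M ^ k) *ᵥ x = (M ^ k) *ᵥ y → x = y := by
    intro k x y h
    have hu : IsUnit (M ^ k).det := by
      rw [Matrix.det_pow]; exact (Ne.isUnit hM).pow k
    have := congrArg (fun z => (M ^ k)⁻¹ *ᵥ z) h
    simpa [Matrix.mulVec_mulVec, Matrix.nonsing_inv_mul _ hu, Matrix.one_mulVec] using this
  have hv0 : ∀ k, vv k ≠ 0 := by
    intro k h
    exact hs (hinj k s 0 (by simpa [Matrix.mulVec_zero] using h))
  have hcancel : ∀ j k : ℕ, j < k → ∀ c : ℂ, vv k = c • vv j → False := by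
    intro j k hjk c h
    apply hev (k - j) (by omega)
    refine ⟨c, hinj j _ _ ?_⟩
    have hpow : M ^ j * M ^ (k - j) = M ^ k := by
      rw [← pow_add]; congr 1; omega
    rw [Matrix.mulVec_mulVec, hpow, Matrix.mulVec_smul]
    exact h
  set d : Fin 3 → ℕ → Option (ℙ ℂ (Fin 2 → ℂ)) := fun i k =>
    if h : F i *ᵥ vv k = 0 then none
    else some (Projectivization.mk ℂ (F i *ᵥ vv k) h) with hd
  set T : Fin 3 → Finset (Option (ℙ ℂ (Fin 2 → ℂ))) :=
    fun i => (Finset.range (n ^ 3 + 1)).image (d i) with hT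
  have hcardT : ∀ i, (T i).card ≤ n := by
    intro i
    set D := (T i).erase none with hD
    have hDlt : D.card < n := by
      by_contra hDc
      push_neg at hDc
      have hwit : ∀ x ∈ D, ∃ k, k ≤ n ^ 3 ∧ d i k = x := by
        intro x hx
        obtain ⟨k, hk, hdk⟩ := Finset.mem_image.mp (Finset.mem_of_mem_erase hx)
        exact ⟨k, Nat.lt_succ_iff.mp (Finset.mem_range.mp hk), hdk⟩
      choose! g hg1 hg2 using hwit
      set Svec : Option (Projectivization ℂ (Fin 2 → ℂ)) → (Fin 2 → ℂ) :=
        fun x => F i *ᵥ vv (g x) with hSvec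
      have key : ∀ x ∈ D, ∃ h0 : Svec x ≠ 0,
          x = some (Projectivization.mk ℂ (Svec x) h0) := by
        intro x hx
        have h2 := hg2 x hx
        have hxn : x ≠ none := Finset.ne_of_mem_erase hx
        by_cases h0 : F i *ᵥ vv (g x) = 0
        · exfalso; apply hxn; rw [← h2, hd]; simp [h0]
        · refine ⟨h0, ?_⟩
          conv_lhs => rw [← h2]
          rw [hd]
          simp only []
          rw [dif_neg h0]
      have hinjOn : Set.InjOn Svec ↑D := by
        intro x hx y hy hxy
        obtain ⟨h0x, hx2⟩ := key x hx
        obtain ⟨h0y, hy2⟩ := key y hy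
        rw [hx2, hy2]
        congr 1
        exact (Projectivization.mk_eq_mk_iff' ℂ _ _ h0x h0y).2
          ⟨1, by rw [one_smul, hxy]⟩
      set S : Finset (Fin 2 → ℂ) := D.image Svec with hS
      have hcardS : n ≤ S.card := by
        rw [hS, Finset.card_image_of_injOn hinjOn]; exact hDc
      have hsub : ↑S ⊆ {w : Fin 2 → ℂ | ∃ k, k ≤ n ^ 3 ∧ w = F i *ᵥ ((M ^ k) *ᵥ s)} := by
        intro u hu
        obtain ⟨x, hx, rfl⟩ := Finset.mem_image.mp hu
        exact ⟨g x, hg1 x hx, rfl⟩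
      obtain ⟨u, hu, w, hw, hne, hnind⟩ := hcon i S hsub hcardS
      obtain ⟨x, hx, rfl⟩ := Finset.mem_image.mp hu
      obtain ⟨y, hy, rfl⟩ := Finset.mem_image.mp hw
      obtain ⟨h0x, hx2⟩ := key x hx
      obtain ⟨h0y, hy2⟩ := key y hy
      apply hnind
      apply pair_indep h0x h0y
      intro hmk
      have hxy : x = y := by rw [hx2, hy2, hmk]
      exact hne (by rw [hxy])
    calc (T i).card ≤ (insert none D).card := by
          apply Finset.card_le_card
          intro x hx
          rcases eq_or_ne x none with rfl | h
          · exact Finset.mem_insert_self _ _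
          · exact Finset.mem_insert_of_mem (Finset.mem_erase.mpr ⟨h, hx⟩)
      _ ≤ D.card + 1 := Finset.card_insert_le _ _
      _ ≤ n := by omega
  -- pigeonhole
  have hmaps : ∀ k ∈ Finset.range (n ^ 3 + 1),
      (d 0 k, d 1 k, d 2 k) ∈ (T 0) ×ˢ ((T 1) ×ˢ (T 2)) := by
    intro k hk
    rw [Finset.mem_product, Finset.mem_product]
    exact ⟨Finset.mem_image_of_mem _ hk,
      Finset.mem_image_of_mem _ hk, Finset.mem_image_of_mem _ hk⟩
  have hcards : ((T 0) ×ˢ ((T 1) ×ˢ (T 2))).card < (Finset.range (n ^ 3 + 1)).card := by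
    rw [Finset.card_product, Finset.card_product, Finset.card_range]
    have h3 : (T 0).card * ((T 1).card * (T 2).card) ≤ n * (n * n) := by
      exact Nat.mul_le_mul (hcardT 0) (Nat.mul_le_mul (hcardT 1) (hcardT 2))
    have : n * (n * n) = n ^ 3 := by ring
    omega
  obtain ⟨j, hj, k, hk, hjk, heq⟩ :=
    Finset.exists_ne_map_eq_of_card_lt_of_maps_to hcards hmaps
  have main : ∀ j k : ℕ, j < k → (∀ i, d i j = d i k) → False := by
    intro j k hjk hdeq
    by_cases hker : ∃ i, d i j = none
    · obtain ⟨i, hij⟩ := hker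
      have hik : d i k = none := (hdeq i).symm.trans hij
      have h1 : F i *ᵥ vv j = 0 := by
        by_contra h; rw [hd] at hij; simp [h] at hij
      have h2 : F i *ᵥ vv k = 0 := by
        by_contra h; rw [hd] at hik; simp [h] at hik
      obtain ⟨μ, hμ⟩ := Submodule.mem_span_singleton.1 (hb i (vv j) h1)
      obtain ⟨ν, hν⟩ := Submodule.mem_span_singleton.1 (hb i (vv k) h2)
      have hμ0 : μ ≠ 0 := by
        rintro rfl; rw [zero_smul] at hμ; exact hv0 j hμ.symm
      apply hcancel j k hjk (ν * μ⁻¹)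
      rw [← hν, ← hμ, smul_smul]
      congr 1
      field_simp
    · push_neg at hker
      have hsome : ∀ i, ∃ c : ℂ, c ≠ 0 ∧ F i *ᵥ vv j = c • (F i *ᵥ vv k) := by
        intro i
        have hjne : F i *ᵥ vv j ≠ 0 := by
          intro h; apply hker i; rw [hd]; simp [h]
        have hkne : F i *ᵥ vv k ≠ 0 := by
          intro h
          apply hker i
          rw [hdeq i, hd]; simp [h]
        have hdd := hdeq i
        rw [hd] at hdd
        simp only [] at hdd
        rw [dif_neg hjne, dif_neg hkne] at hdd
        obtain ⟨a, ha⟩ := (Projectivization.mk_eq_mk_iff ℂ _ _ hjne hkne).1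
          (Option.some.inj hdd)
        exact ⟨(a : ℂ), a.ne_zero, ha.symm⟩
      choose c hc0 hcv using hsome
      have hmem : ∀ i, vv j - c i • vv k ∈ Submodule.span ℂ {b i} := by
        intro i
        apply hb i
        rw [Matrix.mulVec_sub, Matrix.mulVec_smul, hcv i, sub_self]
      have hcoord : ∀ (i m : Fin 3), m ≠ i →
          (b.repr (vv j)) m = c i * (b.repr (vv k)) m := by
        intro i m hmi
        obtain ⟨μ, hμ⟩ := Submodule.mem_span_singleton.1 (hmem i)
        have h := congrArg (fun x => (b.repr x) m) hμ
        simp only [_root_.map_smul, map_sub, Finsupp.smul_apply, Finsupp.sub_apply,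
          Basis.repr_self, smul_eq_mul, Finsupp.single_apply,
          if_neg (fun hh : i = m => hmi hh.symm), mul_zero] at h
        linear_combination -h
      have hune : ∃ m, (b.repr (vv k)) m ≠ 0 := by
        by_contra h
        push_neg at h
        apply hv0 k
        have : b.repr (vv k) = 0 := by ext m; exact h m
        simpa using congrArg b.repr.symm this
      obtain ⟨l, hl⟩ := coord_lemma hune c hcoord
      have hjl : vv j = l • vv k := by
        apply b.repr.injective
        ext m
        rw [_root_.map_smul, Finsupp.smul_apply, smul_eq_mul]
        exact hl m
      have hl0 : l ≠ 0 := by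
        rintro rfl; rw [zero_smul] at hjl; exact hv0 j hjl
      exact hcancel j k hjk l⁻¹
        (by rw [hjl, smul_smul, inv_mul_cancel₀ hl0, one_smul])
  have hdall : ∀ (a b : ℕ), (d 0 a, d 1 a, d 2 a) = (d 0 b, d 1 b, d 2 b) →
      ∀ i : Fin 3, d i a = d i b := by
    intro a b' hab i
    have h0 := congrArg Prod.fst hab
    have h1 := congrArg (fun p => p.2.1) hab
    have h2 := congrArg (fun p => p.2.2) hab
    fin_cases i <;> assumption
  rcases lt_or_gt_of_ne hjk with h | h
  · exact main j k h (hdall j k heq)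
  · exact main k j h (hdall k j heq.symm)
end

section
/- For all natural numbers i and j with i ≡ j (mod 3), there exists a polynomial P in two variables with integer coefficients such that for all complex numbers a and b, aⁱbʲ + aʲbⁱ = P(ab, a³ + b³). -/
noncomputable def auxQ : ℕ → MvPolynomial (Fin 2) ℤ
  | 0 => 2
  | 1 => MvPolynomial.X 1
  | (k+2) => MvPolynomial.X 1 * auxQ (k+1) - (MvPolynomial.X 0)^3 * auxQ k

lemma auxQ_eval (a b : ℂ) : ∀ k : ℕ,
    MvPolynomial.eval₂ (Int.castRingHom ℂ) ![a * b, a ^ 3 + b ^ 3] (auxQ k)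
      = a ^ (3*k) + b ^ (3*k)
  | 0 => by simp [auxQ]; norm_num
  | 1 => by simp [auxQ]
  | (k+2) => by
      simp only [auxQ, MvPolynomial.eval₂_sub, MvPolynomial.eval₂_mul,
        MvPolynomial.eval₂_pow, MvPolynomial.eval₂_X, auxQ_eval a b (k+1),
        auxQ_eval a b k, Matrix.cons_val_zero, Matrix.cons_val_one, Matrix.head_cons]
      ring

lemma aux_key (i k : ℕ) : ∃ P : MvPolynomial (Fin 2) ℤ, ∀ a b : ℂ,
    a ^ i * b ^ (i + 3*k) + a ^ (i + 3*k) * b ^ i =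
      MvPolynomial.eval₂ (Int.castRingHom ℂ) ![a * b, a ^ 3 + b ^ 3] P := by
  refine ⟨(MvPolynomial.X 0)^i * auxQ k, fun a b => ?_⟩
  simp only [MvPolynomial.eval₂_mul, MvPolynomial.eval₂_pow, MvPolynomial.eval₂_X,
    auxQ_eval a b k, Matrix.cons_val_zero]
  ring

theorem stmt_4 (i j : ℕ) (hij : i % 3 = j % 3) :
    ∃ P : MvPolynomial (Fin 2) ℤ, ∀ a b : ℂ,
      a ^ i * b ^ j + a ^ j * b ^ i =
        MvPolynomial.eval₂ (Int.castRingHom ℂ) ![a * b, a ^ 3 + b ^ 3] P := by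
  rcases le_total i j with h | h
  · have h3 : 3 ∣ j - i := (Nat.modEq_iff_dvd' h).mp hij
    obtain ⟨k, hk⟩ := h3
    have hj : j = i + 3*k := by omega
    subst hj
    exact aux_key i k
  · have h3 : 3 ∣ i - j := (Nat.modEq_iff_dvd' h).mp hij.symm
    obtain ⟨k, hk⟩ := h3
    have hi : i = j + 3*k := by omega
    subst hi
    obtain ⟨P, hP⟩ := aux_key j k
    exact ⟨P, fun a b => by rw [add_comm]; exact hP a b⟩
end

section
/- Let B, C ∈ ℂ and suppose the two roots of the quadratic x² + Bx + C (counted with multiplicity) have the same absolute value. Then B·|C| = conj(B)·C and B²·conj(C) = conj(B)²·C. If moreover B ≠ 0 and C ≠ 0, then Arg(B²) = Arg(C). -/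
open Complex

theorem stmt_5 (B C : ℂ)
    (h : ∃ α β : ℂ, α + β = -B ∧ α * β = C ∧ ‖α‖ = ‖β‖) :
    B * (‖C‖ : ℂ) = (starRingEnd ℂ) B * C ∧
    B ^ 2 * (starRingEnd ℂ) C = ((starRingEnd ℂ) B) ^ 2 * C ∧
    (B ≠ 0 → C ≠ 0 → Complex.arg (B ^ 2) = Complex.arg C) := by
  obtain ⟨α, β, hs, hp, habs⟩ := h
  have hB : B = -(α + β) := by linear_combination hs
  have hα : (starRingEnd ℂ) α * α = ((‖β‖ ^ 2 : ℝ) : ℂ) := by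
    rw [← habs, mul_comm, Complex.mul_conj]
    norm_cast
    exact (Complex.sq_norm α).symm
  have hβ : (starRingEnd ℂ) β * β = ((‖β‖ ^ 2 : ℝ) : ℂ) := by
    rw [mul_comm, Complex.mul_conj]
    norm_cast
    exact (Complex.sq_norm β).symm
  have hCabs : ((‖C‖ : ℝ) : ℂ) = ((‖β‖ ^ 2 : ℝ) : ℂ) := by
    rw [← hp, norm_mul, habs]
    push_cast
    ring
  have key : (starRingEnd ℂ) B * C = ((‖β‖ ^ 2 : ℝ) : ℂ) * B := by
    rw [hB, ← hp]
    simp only [map_neg, map_add]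
    linear_combination (-β) * hα + (-α) * hβ
  have keyc : B * (starRingEnd ℂ) C = ((‖β‖ ^ 2 : ℝ) : ℂ) * (starRingEnd ℂ) B := by
    have := congrArg (starRingEnd ℂ) key
    simpa [map_mul, Complex.conj_conj, Complex.conj_ofReal] using this
  have g1 : B * (‖C‖ : ℂ) = (starRingEnd ℂ) B * C := by
    rw [hCabs, key]; ring
  refine ⟨g1, ?_, ?_⟩
  · linear_combination B * keyc - (starRingEnd ℂ) B * key
  · intro hB0 hC0
    have hBB : B * (starRingEnd ℂ) B = ((‖B‖ ^ 2 : ℝ) : ℂ) := by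
      rw [Complex.mul_conj]
      norm_cast
      exact (Complex.sq_norm B).symm
    have h2 : B ^ 2 * ((‖C‖ : ℝ) : ℂ) = ((‖B‖ ^ 2 : ℝ) : ℂ) * C := by
      linear_combination B * g1 + C * hBB
    have hCa : (‖C‖ : ℝ) ≠ 0 := by
      simpa using (norm_ne_zero_iff.mpr hC0)
    have h3 : B ^ 2 = ((‖B‖ ^ 2 / ‖C‖ : ℝ) : ℂ) * C := by
      push_cast
      rw [div_mul_eq_mul_div, eq_div_iff (by exact_mod_cast hCa)]
      push_cast at h2
      linear_combination h2
    have hBa : ‖B‖ ≠ 0 := norm_ne_zero_iff.mpr hB0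
    rw [h3]
    exact Complex.arg_real_mul C (div_pos (by positivity) (by positivity))
end

section
/- Let B, C, D ∈ ℂ and suppose the three roots of the cubic x³ + Bx² + Cx + D (counted with multiplicity) all have the same absolute value. Then C·|C|² = conj(B)·|B|²·D. -/
theorem stmt_6 (B C D : ℂ)
    (h : ∃ α β γ : ℂ, α + β + γ = -B ∧ α * β + β * γ + γ * α = C ∧ α * β * γ = -D ∧
      ‖α‖ = ‖β‖ ∧ ‖β‖ = ‖γ‖) :
    C * ((‖C‖ : ℝ) : ℂ) ^ 2 = (starRingEnd ℂ) B * ((‖B‖ : ℝ) : ℂ) ^ 2 * D := by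
  obtain ⟨α, β, γ, hs, hp, hq, hab, hbc⟩ := h
  have habs : ∀ z : ℂ, ((‖z‖ : ℝ) : ℂ) ^ 2 = z * (starRingEnd ℂ) z := by
    intro z
    rw [Complex.mul_conj, ← Complex.sq_norm]
    push_cast
    ring
  rw [habs C, habs B]
  have hB : B = -(α + β + γ) := by linear_combination hs
  have hC : C = α * β + β * γ + γ * α := hp.symm
  have hD : D = -(α * β * γ) := by linear_combination hq
  subst hB hC hD
  by_cases h0 : α = 0
  · have hb0 : β = 0 := by
      have := hab; rw [h0] at this; simpa using this.symm
    have hc0 : γ = 0 := by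
      have := hbc; rw [hb0] at this; simpa using this.symm
    simp [h0, hb0, hc0]
  · have hb0 : β ≠ 0 := by
      intro hb; apply h0
      rw [hb] at hab; simpa using hab
    have hc0 : γ ≠ 0 := by
      intro hc; apply hb0
      rw [hc] at hbc; simpa using hbc
    set r : ℝ := ‖α‖ with hr
    have hca : (starRingEnd ℂ) α = (r : ℂ) ^ 2 / α := by
      rw [eq_div_iff h0]
      have := Complex.mul_conj α
      rw [← Complex.sq_norm α] at this
      push_cast at this ⊢
      linear_combination this
    have hcb : (starRingEnd ℂ) β = (r : ℂ) ^ 2 / β := by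
      rw [eq_div_iff hb0]
      have := Complex.mul_conj β
      rw [← Complex.sq_norm β, ← hab] at this
      push_cast at this ⊢
      linear_combination this
    have hcg : (starRingEnd ℂ) γ = (r : ℂ) ^ 2 / γ := by
      rw [eq_div_iff hc0]
      have := Complex.mul_conj γ
      rw [← Complex.sq_norm γ, ← hbc, ← hab] at this
      push_cast at this ⊢
      linear_combination this
    simp only [map_add, map_neg, map_mul, hca, hcb, hcg]
    field_simp
    ring
end

section
/- Let α, β, δ ∈ ℂ with |α| = |β|, α ≠ β, δ ≠ 0, and |α + δ| = |β + δ|. Then there exist real numbers r and s such that rδ = α + β and sδ² = αβ. -/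
theorem stmt_8 (α β δ : ℂ) (habs : ‖α‖ = ‖β‖) (hne : α ≠ β)
    (hδ : δ ≠ 0) (hshift : ‖α + δ‖ = ‖β + δ‖) :
    ∃ r s : ℝ, (r : ℂ) * δ = α + β ∧ (s : ℂ) * δ ^ 2 = α * β := by
  have hns : Complex.normSq α = Complex.normSq β := by
    rw [← Complex.sq_norm, ← Complex.sq_norm, habs]
  have h1 : α * starRingEnd ℂ α = β * starRingEnd ℂ β := by
    rw [Complex.mul_conj, Complex.mul_conj, hns]
  have hns2 : Complex.normSq (α + δ) = Complex.normSq (β + δ) := by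
    rw [← Complex.sq_norm, ← Complex.sq_norm, hshift]
  have h2' : (α + δ) * starRingEnd ℂ (α + δ) = (β + δ) * starRingEnd ℂ (β + δ) := by
    rw [Complex.mul_conj, Complex.mul_conj, hns2]
  have h2 : α * starRingEnd ℂ δ + starRingEnd ℂ α * δ
      = β * starRingEnd ℂ δ + starRingEnd ℂ β * δ := by
    have := h2'
    simp only [map_add] at this
    linear_combination this - h1
  have h3 : (α - β) * starRingEnd ℂ δ = (starRingEnd ℂ β - starRingEnd ℂ α) * δ := by
    linear_combination h2
  have hd : α - β ≠ 0 := sub_ne_zero.mpr hne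
  have hcδ : starRingEnd ℂ δ ≠ 0 := by simpa using hδ
  have claimA : (starRingEnd ℂ α + starRingEnd ℂ β) * δ = (α + β) * starRingEnd ℂ δ := by
    apply mul_left_cancel₀ hd
    linear_combination (2*δ)*h1 - (α+β)*h2
  have claimB : (starRingEnd ℂ α * starRingEnd ℂ β) * δ ^ 2
      = (α * β) * (starRingEnd ℂ δ) ^ 2 := by
    apply mul_left_cancel₀ (pow_ne_zero 2 hd)
    linear_combination (δ^2*(α*starRingEnd ℂ β - β*starRingEnd ℂ α))*h1
      - (α*β*((α-β)*starRingEnd ℂ δ + (starRingEnd ℂ β - starRingEnd ℂ α)*δ))*h3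
  -- (α+β)/δ is real
  have hz1 : starRingEnd ℂ ((α + β) / δ) = (α + β) / δ := by
    rw [map_div₀, map_add]
    field_simp
    linear_combination claimA
  have hz2 : starRingEnd ℂ ((α * β) / δ ^ 2) = (α * β) / δ ^ 2 := by
    rw [map_div₀, map_mul, map_pow]
    field_simp
    linear_combination claimB
  obtain ⟨r, hr⟩ := Complex.conj_eq_iff_real.mp hz1
  obtain ⟨s, hs⟩ := Complex.conj_eq_iff_real.mp hz2
  refine ⟨r, s, ?_, ?_⟩
  · rw [← hr]; field_simp
  · rw [← hs]; field_simp
end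

section
/- Let M be a 2×2 complex matrix and δ ∈ ℂ with δ ≠ 0, and set M' = M + δI. Suppose the two eigenvalues of M are distinct and have equal absolute value, and the two eigenvalues of M' have equal absolute value. Then there exist real numbers r and s such that tr(M) = rδ and det(M) = sδ². -/
open Matrix

theorem stmt_9 (M : Matrix (Fin 2) (Fin 2) ℂ) (δ : ℂ) (hδ : δ ≠ 0)
    (M' : Matrix (Fin 2) (Fin 2) ℂ) (hM' : M' = M + δ • (1 : Matrix (Fin 2) (Fin 2) ℂ))
    (hM : ∃ α β : ℂ, α + β = M.trace ∧ α * β = M.det ∧ α ≠ β ∧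
      ‖α‖ = ‖β‖)
    (hM'eig : ∃ α' β' : ℂ, α' + β' = M'.trace ∧ α' * β' = M'.det ∧
      ‖α'‖ = ‖β'‖) :
    ∃ r s : ℝ, M.trace = (r : ℂ) * δ ∧ M.det = (s : ℂ) * δ ^ 2 := by
  obtain ⟨α, β, hsum, hprod, hne, habs⟩ := hM
  obtain ⟨α', β', hsum', hprod', habs'⟩ := hM'eig
  have htr' : M'.trace = M.trace + 2 * δ := by
    subst hM'; simp [Matrix.trace_fin_two, Matrix.one_apply]; ring
  have hdet' : M'.det = M.det + δ * M.trace + δ ^ 2 := by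
    subst hM'; simp [Matrix.det_fin_two, Matrix.trace_fin_two, Matrix.one_apply]; ring
  have hS : α' + β' = (α + δ) + (β + δ) := by
    rw [hsum', htr', ← hsum]; ring
  have hP : α' * β' = (α + δ) * (β + δ) := by
    rw [hprod', hdet', ← hsum, ← hprod]; ring
  have hcases : (α' - (α + δ)) * (α' - (β + δ)) = 0 := by
    linear_combination α' * hS - hP
  have habs2 : ‖α + δ‖ = ‖β + δ‖ := by
    rcases mul_eq_zero.mp hcases with h | h
    · have h1 : α' = α + δ := sub_eq_zero.mp h
      have h2 : β' = β + δ := by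
        have := hS; rw [h1] at this; linear_combination this
      rw [← h1, ← h2]; exact habs'
    · have h1 : α' = β + δ := sub_eq_zero.mp h
      have h2 : β' = α + δ := by
        have := hS; rw [h1] at this; linear_combination this
      rw [← h1, ← h2]; exact habs'.symm
  -- translate abs equalities into conjugation identities
  set c := (starRingEnd ℂ)
  have h1 : α * c α = β * c β := by
    rw [Complex.mul_conj, Complex.mul_conj]
    norm_cast
    rw [← Complex.sq_norm, ← Complex.sq_norm, habs]
  have h2 : (α + δ) * c (α + δ) = (β + δ) * c (β + δ) := by
    rw [Complex.mul_conj, Complex.mul_conj]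
    norm_cast
    rw [← Complex.sq_norm, ← Complex.sq_norm, habs2]
  have hE : α * c δ + δ * c α = β * c δ + δ * c β := by
    have h2' : (α + δ) * (c α + c δ) = (β + δ) * (c β + c δ) := by
      simpa [map_add] using h2
    linear_combination h2' - h1
  have hcne : c α ≠ c β := fun h => hne ((starRingEnd ℂ).injective h)
  have htr : (α + β) * c δ = (c α + c β) * δ := by
    have key : ((α + β) * c δ - (c α + c β) * δ) * (c α - c β) = 0 := by
      linear_combination (2 * c δ) * h1 - (c α + c β) * hE
    rcases mul_eq_zero.mp key with h | h
    · linear_combination h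
    · exact absurd (sub_eq_zero.mp h) hcne
  have hdet2 : (α * β) * c δ ^ 2 = (c α * c β) * δ ^ 2 := by
    have hE2 : (α - β) * c δ = (c β - c α) * δ := by linear_combination hE
    linear_combination ((α + β) * c δ + (c α + c β) * δ) / 4 * htr
      - ((α - β) * c δ + (c β - c α) * δ) / 4 * hE2
  have hδc : c δ ≠ 0 := fun h => hδ (by simpa using congrArg c h)
  -- realness
  have hr : c ((α + β) / δ) = (α + β) / δ := by
    rw [map_div₀]
    field_simp
    rw [map_add]; linear_combination -htr
  have hs : c ((α * β) / δ ^ 2) = (α * β) / δ ^ 2 := by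
    rw [map_div₀, map_pow]
    field_simp
    rw [map_mul]; linear_combination -hdet2
  refine ⟨((α + β) / δ).re, ((α * β) / δ ^ 2).re, ?_, ?_⟩
  · have := Complex.conj_eq_iff_re.mp hr
    rw [← hsum, this]
    field_simp
  · have := Complex.conj_eq_iff_re.mp hs
    rw [← hprod, this]
    field_simp
end

section
/- Let a, b ∈ ℂ, set X = ab and Y = a³ + b³, and suppose X ≠ 1, X ≠ −1, X² + X + Y ≠ 0, 4(X−1)²(X+1) ≠ (Y+2)², and that X and Y are not both real. Then at least one of the matrices M₁₀, M₁₁ has both eigenvalues nonzero and of distinct absolute values. -/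
open Matrix

/-- A 2×2 complex matrix has both eigenvalues nonzero and of distinct absolute values:
the eigenvalues are the roots α, β of the characteristic polynomial, equivalently the
pair with α + β = tr A and α·β = det A. -/
def nonzeroDistinctNormEigenvalues (A : Matrix (Fin 2) (Fin 2) ℂ) : Prop :=
  ∃ α β : ℂ, α + β = A.trace ∧ α * β = A.det ∧ α ≠ 0 ∧ β ≠ 0 ∧
    ‖α‖ ≠ ‖β‖

private lemma abs_eq_mul_conj {z w : ℂ} (h : ‖z‖ = ‖w‖) :
    z * (starRingEnd ℂ) z = w * (starRingEnd ℂ) w := by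
  rw [Complex.mul_conj, Complex.mul_conj, Complex.normSq_eq_norm_sq, Complex.normSq_eq_norm_sq, h]

private lemma key_lemma (X T c d : ℂ) (hc : c = X - 1) (hc0 : c ≠ 0) (hd0 : d ≠ 0)
    (hd2 : d ^ 2 = T ^ 2 - 4 * (c ^ 2 * (X + 1)))
    (hE1 : T * (starRingEnd ℂ) d + (starRingEnd ℂ) T * d = 0)
    (hE2 : c * (starRingEnd ℂ) d + (starRingEnd ℂ) c * d = 0) :
    (starRingEnd ℂ) X = X ∧ (starRingEnd ℂ) T = T := by
  set E := starRingEnd ℂ with hE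
  have hA : E T * c - T * E c = 0 := by
    have h : d * (E T * c - T * E c) = 0 := by linear_combination c * hE1 - T * hE2
    rcases mul_eq_zero.mp h with h' | h'
    · exact absurd h' hd0
    · exact h'
  have hEc0 : E c ≠ 0 := by simpa [hE] using hc0
  have hd2' : (E d) ^ 2 = (E T) ^ 2 - 4 * ((E c) ^ 2 * (E X + 1)) := by
    have := congrArg E hd2
    simpa [hE, map_sub, map_add, _root_.map_mul, map_pow, map_ofNat, _root_.map_one] using this
  have hsq : c ^ 2 * (E d) ^ 2 = (E c) ^ 2 * d ^ 2 := by
    linear_combination (c * E d - E c * d) * hE2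
  have hEX : E X = X := by
    have h : (c * E c) ^ 2 * (E X - X) * 4 = 0 := by
      linear_combination c ^ 2 * hd2' - (E c) ^ 2 * hd2 - hsq + (E T * c + T * E c) * hA
    have h2 : E X - X = 0 := by
      rcases mul_eq_zero.mp h with h' | h'
      · rcases mul_eq_zero.mp h' with h'' | h''
        · exact absurd h'' (pow_ne_zero _ (mul_ne_zero hc0 hEc0))
        · exact h''
      · norm_num at h'
    exact sub_eq_zero.mp h2
  refine ⟨hEX, ?_⟩
  have hEcc : E c = c := by rw [hc]; simp [hE, map_sub, hEX]; exact hEX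
  have h3 : (E T - T) * c = 0 := by linear_combination hA + T * hEcc
  rcases mul_eq_zero.mp h3 with h' | h'
  · exact sub_eq_zero.mp h'
  · exact absurd h' hc0

set_option maxHeartbeats 800000 in
theorem stmt_10 (a b X Y : ℂ) (hX : X = a * b) (hY : Y = a ^ 3 + b ^ 3)
    (hX1 : X ≠ 1) (hX2 : X ≠ -1) (hXY : X ^ 2 + X + Y ≠ 0)
    (h4 : 4 * (X - 1) ^ 2 * (X + 1) ≠ (Y + 2) ^ 2)
    (hreal : ¬ (X.im = 0 ∧ Y.im = 0)) :
    nonzeroDistinctNormEigenvalues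
        !![a ^ 3 + 1, a + b ^ 2; a ^ 2 + b, b ^ 3 + 1] ∨
      nonzeroDistinctNormEigenvalues
        !![a ^ 3 + a * b, a + b ^ 2; a ^ 2 + b, a * b + b ^ 3] := by
  set E := starRingEnd ℂ with hEdef
  set c : ℂ := X - 1 with hc
  set T : ℂ := Y + 2 with hT
  set D : ℂ := c ^ 2 * (X + 1) with hD
  have hc0 : c ≠ 0 := sub_ne_zero.mpr hX1
  have hX2' : X + 1 ≠ 0 := by intro h; apply hX2; linear_combination h
  have hD0 : D ≠ 0 := mul_ne_zero (pow_ne_zero 2 hc0) hX2'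
  obtain ⟨d, hd2⟩ : ∃ d : ℂ, d ^ 2 = T ^ 2 - 4 * D :=
    IsAlgClosed.exists_pow_nat_eq (T ^ 2 - 4 * D) zero_lt_two
  have hd0 : d ≠ 0 := by
    intro h
    apply h4
    have : (0:ℂ) = T ^ 2 - 4 * D := by rw [← hd2, h]; ring
    rw [hD, hT, hc] at this
    linear_combination this
  set α : ℂ := (T + d) / 2 with hα
  set β : ℂ := (T - d) / 2 with hβ
  have hsum : α + β = T := by rw [hα, hβ]; ring
  have hprod : α * β = D := by
    rw [hα, hβ]
    field_simp
    linear_combination -hd2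
  have hα0 : α ≠ 0 := fun h => hD0 (by rw [← hprod, h, zero_mul])
  have hβ0 : β ≠ 0 := fun h => hD0 (by rw [← hprod, h, mul_zero])
  have hD1 : (α + c) * (β + c) = c * (X ^ 2 + X + Y) := by
    have : (α + c) * (β + c) = D + c * T + c ^ 2 := by
      rw [mul_add, add_mul, add_mul, hprod, ← hsum]; ring
    rw [this, hD, hT, hc]; ring
  have hD10 : (α + c) * (β + c) ≠ 0 := by
    rw [hD1]; exact mul_ne_zero hc0 hXY
  have htr0 : !![a ^ 3 + 1, a + b ^ 2; a ^ 2 + b, b ^ 3 + 1].trace = T := by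
    rw [Matrix.trace_fin_two_of, hT, hY]; ring
  have hdet0 : !![a ^ 3 + 1, a + b ^ 2; a ^ 2 + b, b ^ 3 + 1].det = D := by
    rw [Matrix.det_fin_two_of, hD, hc, hX]; ring
  have htr1 : !![a ^ 3 + a * b, a + b ^ 2; a ^ 2 + b, a * b + b ^ 3].trace = T + 2 * c := by
    rw [Matrix.trace_fin_two_of, hT, hc, hX, hY]; ring
  have hdet1 : !![a ^ 3 + a * b, a + b ^ 2; a ^ 2 + b, a * b + b ^ 3].det
      = (α + c) * (β + c) := by
    rw [hD1, Matrix.det_fin_two_of, hc, hX, hY]; ring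
  have hEα : E α = (E T + E d) / 2 := by rw [hα]; simp [hEdef, map_div₀, map_ofNat]
  have hEβ : E β = (E T - E d) / 2 := by rw [hβ]; simp [hEdef, map_div₀, map_ofNat]
  by_cases h0 : ‖α‖ = ‖β‖
  · by_cases h1 : ‖α + c‖ = ‖β + c‖
    · exfalso
      have e0 : α * E α = β * E β := abs_eq_mul_conj h0
      have e1 : (α + c) * E (α + c) = (β + c) * E (β + c) := abs_eq_mul_conj h1
      have hE1 : T * E d + E T * d = 0 := by
        rw [hα, hβ, hEα, hEβ] at e0
        field_simp at e0
        linear_combination e0 / 2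
      have hE2 : c * E d + E c * d = 0 := by
        rw [map_add, map_add] at e1
        rw [hα, hβ, hEα, hEβ] at e1
        field_simp at e1
        linear_combination e1 / 4 - hE1 / 2
      obtain ⟨hEX, hET⟩ := key_lemma X T c d hc hc0 hd0 (by rw [← hD]; exact hd2) hE1 hE2
      apply hreal
      constructor
      · exact Complex.conj_eq_iff_im.mp hEX
      · have : E Y = Y := by
          have := hET
          rw [hT] at this
          simp only [hEdef, map_add, map_ofNat] at this
          exact add_right_cancel this
        exact Complex.conj_eq_iff_im.mp this
    · right
      exact ⟨α + c, β + c, by rw [htr1, ← hsum]; ring, by rw [hdet1],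
        left_ne_zero_of_mul hD10, right_ne_zero_of_mul hD10, h1⟩
  · left
    exact ⟨α, β, by rw [htr0, hsum], by rw [hdet0, hprod],
      hα0, hβ0, h0⟩
end

section
/- Let a, b ∈ ℂ, set X = ab and Y = a³ + b³, and suppose X² + X + Y = 0 and X is not a real number. Then the matrix M₁₂ has both eigenvalues nonzero and of distinct absolute values. -/
open Matrix

lemma aux_eigen (X t d : ℂ) (hXim : X.im ≠ 0)
    (ht : t = X * (X - 1) ^ 3) (hd : d = -(X ^ 2 * (X - 1) ^ 5)) :
    ∃ α β : ℂ, α + β = t ∧ α * β = d ∧ α ≠ 0 ∧ β ≠ 0 ∧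
      ‖α‖ ≠ ‖β‖ := by
  have hX0 : X ≠ 0 := by
    intro h; exact hXim (by rw [h]; simp)
  have hX1 : X - 1 ≠ 0 := by
    intro h
    have : X = 1 := sub_eq_zero.mp h
    exact hXim (by rw [this]; simp)
  have hd0 : d ≠ 0 := by
    rw [hd]
    exact neg_ne_zero.mpr (mul_ne_zero (pow_ne_zero _ hX0) (pow_ne_zero _ hX1))
  obtain ⟨δ, hδ⟩ := Complex.isAlgClosed.exists_pow_nat_eq (t ^ 2 - 4 * d) (n := 2)
    (by norm_num)
  refine ⟨(t + δ) / 2, (t - δ) / 2, by ring, ?_, ?_, ?_, ?_⟩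
  · linear_combination (-(1 : ℂ) / 4) * hδ
  · intro h
    apply hd0
    have hprod : (t + δ) / 2 * ((t - δ) / 2) = d := by
      linear_combination (-(1 : ℂ) / 4) * hδ
    rw [← hprod, h, zero_mul]
  · intro h
    apply hd0
    have hprod : (t + δ) / 2 * ((t - δ) / 2) = d := by
      linear_combination (-(1 : ℂ) / 4) * hδ
    rw [← hprod, h, mul_zero]
  · set α := (t + δ) / 2 with hα
    set β := (t - δ) / 2 with hβ
    have hprod : α * β = d := by
      rw [hα, hβ]; linear_combination (-(1 : ℂ) / 4) * hδ
    have hsum : α + β = t := by rw [hα, hβ]; ring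
    have hα0 : α ≠ 0 := by
      intro h; exact hd0 (by rw [← hprod, h, zero_mul])
    have hβ0 : β ≠ 0 := by
      intro h; exact hd0 (by rw [← hprod, h, mul_zero])
    intro habs
    -- |α| = |β| gives normSq α = normSq β
    have hns : (Complex.normSq α : ℂ) = (Complex.normSq β : ℂ) := by
      norm_cast
      rw [← Complex.sq_norm, ← Complex.sq_norm, habs]
    have cα : (starRingEnd ℂ) α * α = (Complex.normSq α : ℂ) := by
      rw [mul_comm]; exact Complex.mul_conj α
    have cβ : (starRingEnd ℂ) β * β = (Complex.normSq α : ℂ) := by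
      rw [hns, mul_comm]; exact Complex.mul_conj β
    have hconj0 : (starRingEnd ℂ) α * (starRingEnd ℂ) β ≠ 0 :=
      mul_ne_zero (by simpa using hα0) (by simpa using hβ0)
    -- key symmetry: (α+β)^2 conj(αβ) = conj(α+β)^2 (αβ)
    have key : (α + β) ^ 2 * ((starRingEnd ℂ) α * (starRingEnd ℂ) β)
        = ((starRingEnd ℂ) α + (starRingEnd ℂ) β) ^ 2 * (α * β) := by
      have hmul : ((α + β) ^ 2 * ((starRingEnd ℂ) α * (starRingEnd ℂ) β)
          - ((starRingEnd ℂ) α + (starRingEnd ℂ) β) ^ 2 * (α * β))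
          * ((starRingEnd ℂ) α * (starRingEnd ℂ) β) = 0 := by
        linear_combination (((starRingEnd ℂ) α * (starRingEnd ℂ) β) * (α + β)
            + (Complex.normSq α : ℂ) * ((starRingEnd ℂ) α + (starRingEnd ℂ) β)) *
            ((starRingEnd ℂ) β * cα + (starRingEnd ℂ) α * cβ)
          - ((starRingEnd ℂ) α + (starRingEnd ℂ) β) ^ 2 *
            ((starRingEnd ℂ) β * β * cα + (Complex.normSq α : ℂ) * cβ)
      rcases mul_eq_zero.mp hmul with h | h
      · exact sub_eq_zero.mp h
      · exact absurd h hconj0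
    -- rewrite via t, d
    have keytd : t ^ 2 * (starRingEnd ℂ) d = ((starRingEnd ℂ) t) ^ 2 * d := by
      calc t ^ 2 * (starRingEnd ℂ) d
          = (α + β) ^ 2 * ((starRingEnd ℂ) α * (starRingEnd ℂ) β) := by
            rw [← hprod, ← hsum, _root_.map_mul]
        _ = ((starRingEnd ℂ) α + (starRingEnd ℂ) β) ^ 2 * (α * β) := key
        _ = ((starRingEnd ℂ) t) ^ 2 * d := by
            rw [← _root_.map_add (starRingEnd ℂ), hsum, hprod]
    -- substitute explicit formulas
    set Xc := (starRingEnd ℂ) X with hXc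
    have htc : (starRingEnd ℂ) t = Xc * (Xc - 1) ^ 3 := by
      rw [ht]; simp [hXc]
    have hdc : (starRingEnd ℂ) d = -(Xc ^ 2 * (Xc - 1) ^ 5) := by
      rw [hd]; simp [hXc]
    rw [htc, hdc, ht, hd] at keytd
    have hXc0 : Xc ≠ 0 := by simpa [hXc] using hX0
    have hXc1 : Xc - 1 ≠ 0 := by
      intro h
      apply hX1
      have := congrArg (starRingEnd ℂ) h
      simpa [hXc] using this
    have hfac : (X - Xc) * (X ^ 2 * Xc ^ 2 * (X - 1) ^ 5 * (Xc - 1) ^ 5) = 0 := by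
      linear_combination -keytd
    have hXXc : X = Xc := by
      rcases mul_eq_zero.mp hfac with h | h
      · exact sub_eq_zero.mp h
      · exact absurd h (mul_ne_zero (mul_ne_zero (mul_ne_zero
          (pow_ne_zero _ hX0) (pow_ne_zero _ hXc0)) (pow_ne_zero _ hX1))
          (pow_ne_zero _ hXc1))
    exact hXim (Complex.conj_eq_iff_im.mp hXXc.symm)

theorem stmt_11 (a b X Y : ℂ) (hX : X = a * b) (hY : Y = a ^ 3 + b ^ 3)
    (hXY : X ^ 2 + X + Y = 0) (hXreal : X.im ≠ 0) :
    nonzeroDistinctNormEigenvalues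
      !![a ^ 6 + 2 * a ^ 4 * b + a ^ 3 + 3 * a ^ 2 * b ^ 2 + a * b ^ 4,
         a ^ 4 + 3 * a ^ 2 * b + 2 * a * b ^ 3 + b ^ 5 + b ^ 2;
         a ^ 5 + 2 * a ^ 3 * b + a ^ 2 + 3 * a * b ^ 2 + b ^ 4,
         a ^ 4 * b + 3 * a ^ 2 * b ^ 2 + 2 * a * b ^ 4 + b ^ 6 + b ^ 3] := by
  subst hX hY
  unfold nonzeroDistinctNormEigenvalues
  have htr := Matrix.trace_fin_two_of
    (a ^ 6 + 2 * a ^ 4 * b + a ^ 3 + 3 * a ^ 2 * b ^ 2 + a * b ^ 4)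
    (a ^ 4 + 3 * a ^ 2 * b + 2 * a * b ^ 3 + b ^ 5 + b ^ 2)
    (a ^ 5 + 2 * a ^ 3 * b + a ^ 2 + 3 * a * b ^ 2 + b ^ 4)
    (a ^ 4 * b + 3 * a ^ 2 * b ^ 2 + 2 * a * b ^ 4 + b ^ 6 + b ^ 3)
  have hdet := Matrix.det_fin_two_of
    (a ^ 6 + 2 * a ^ 4 * b + a ^ 3 + 3 * a ^ 2 * b ^ 2 + a * b ^ 4)
    (a ^ 4 + 3 * a ^ 2 * b + 2 * a * b ^ 3 + b ^ 5 + b ^ 2)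
    (a ^ 5 + 2 * a ^ 3 * b + a ^ 2 + 3 * a * b ^ 2 + b ^ 4)
    (a ^ 4 * b + 3 * a ^ 2 * b ^ 2 + 2 * a * b ^ 4 + b ^ 6 + b ^ 3)
  rw [htr, hdet]
  have ht : ((a ^ 6 + 2 * a ^ 4 * b + a ^ 3 + 3 * a ^ 2 * b ^ 2 + a * b ^ 4)
      + (a ^ 4 * b + 3 * a ^ 2 * b ^ 2 + 2 * a * b ^ 4 + b ^ 6 + b ^ 3))
      = (a * b) * ((a * b) - 1) ^ 3 := by
    linear_combination ((a ^ 3 + b ^ 3) - (a * b) ^ 2 + 2 * (a * b) + 1) * hXY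
  have hd : ((a ^ 6 + 2 * a ^ 4 * b + a ^ 3 + 3 * a ^ 2 * b ^ 2 + a * b ^ 4)
      * (a ^ 4 * b + 3 * a ^ 2 * b ^ 2 + 2 * a * b ^ 4 + b ^ 6 + b ^ 3)
      - (a ^ 4 + 3 * a ^ 2 * b + 2 * a * b ^ 3 + b ^ 5 + b ^ 2)
      * (a ^ 5 + 2 * a ^ 3 * b + a ^ 2 + 3 * a * b ^ 2 + b ^ 4))
      = -((a * b) ^ 2 * ((a * b) - 1) ^ 5) := by
    linear_combination (((a * b) - 1) * (a ^ 3 + b ^ 3) ^ 2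
      + (-1 - 3 * (a * b) + 5 * (a * b) ^ 2 - (a * b) ^ 3) * (a ^ 3 + b ^ 3)
      + (-2 * (a * b) - 3 * (a * b) ^ 2 + 9 * (a * b) ^ 3 - 5 * (a * b) ^ 4
        + (a * b) ^ 5)) * hXY
  rw [ht, hd]
  exact aux_eigen (a * b) _ _ hXreal rfl rfl
end

section
/- Let a, b ∈ ℂ, set X = ab and Y = a³ + b³, and suppose X = −1, Y ≠ 2i, Y ≠ −2i, and Y is not a real number. Then at least one of the matrices M₁₁, M₁₃ has both eigenvalues nonzero and of distinct absolute values. -/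
open Matrix

theorem stmt_12 (a b X Y : ℂ) (hX : X = a * b) (hY : Y = a ^ 3 + b ^ 3)
    (hXm1 : X = -1) (hY1 : Y ≠ 2 * Complex.I) (hY2 : Y ≠ -2 * Complex.I)
    (hYreal : Y.im ≠ 0) :
    nonzeroDistinctNormEigenvalues
        !![a ^ 3 + a * b, a + b ^ 2; a ^ 2 + b, a * b + b ^ 3] ∨
      nonzeroDistinctNormEigenvalues
        !![a ^ 6 + 3 * a ^ 3 + 3 * a * b + b ^ 3,
           a ^ 4 + 2 * a ^ 2 * b + a * b ^ 3 + a + b ^ 5 + 2 * b ^ 2;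
           a ^ 5 + a ^ 3 * b + 2 * a ^ 2 + 2 * a * b ^ 2 + b ^ 4 + b,
           a ^ 3 + 3 * a * b + b ^ 6 + 3 * b ^ 3] := by
  have hab : a * b = -1 := by rw [← hX, hXm1]
  subst hY
  have hY0 : a ^ 3 + b ^ 3 ≠ 0 := by
    intro h
    apply hYreal
    rw [h]
    simp
  by_cases hYabs : ‖a ^ 3 + b ^ 3‖ = 2
  · -- |Y| = 2 : use M₁₃
    right
    obtain ⟨δ, hδ⟩ := IsAlgClosed.exists_pow_nat_eq
      (((a ^ 3 + b ^ 3) ^ 2 + 4 * (a ^ 3 + b ^ 3) - 4) ^ 2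
        - 4 * (-16 * (a ^ 3 + b ^ 3))) (n := 2) (by norm_num)
    refine ⟨(((a ^ 3 + b ^ 3) ^ 2 + 4 * (a ^ 3 + b ^ 3) - 4) + δ) / 2,
            (((a ^ 3 + b ^ 3) ^ 2 + 4 * (a ^ 3 + b ^ 3) - 4) - δ) / 2, ?_, ?_, ?_, ?_, ?_⟩
    · rw [Matrix.trace_fin_two_of]
      linear_combination (2 * a ^ 2 * b ^ 2 - 2 * a * b - 4) * hab
    · rw [Matrix.det_fin_two_of]
      linear_combination (-1/4 : ℂ) * hδ +
        (-14 * b ^ 3 + a * b + 8 * a * b ^ 4 - 2 * a ^ 2 * b ^ 2 - 2 * a ^ 2 * b ^ 5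
          - 14 * a ^ 3 + 8 * a ^ 4 * b + 2 * a ^ 4 * b ^ 4 - 2 * a ^ 5 * b ^ 2
          - a ^ 5 * b ^ 5) * hab
    · intro h
      apply hY0
      have h2 : (-16 : ℂ) * (a ^ 3 + b ^ 3) =
          ((((a ^ 3 + b ^ 3) ^ 2 + 4 * (a ^ 3 + b ^ 3) - 4) + δ) / 2) *
          ((((a ^ 3 + b ^ 3) ^ 2 + 4 * (a ^ 3 + b ^ 3) - 4) - δ) / 2) := by
        linear_combination (1/4 : ℂ) * hδ
      rw [h, zero_mul] at h2
      have h16 : (-16 : ℂ) ≠ 0 := by norm_num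
      exact (mul_eq_zero.mp h2).resolve_left h16
    · intro h
      apply hY0
      have h2 : (-16 : ℂ) * (a ^ 3 + b ^ 3) =
          ((((a ^ 3 + b ^ 3) ^ 2 + 4 * (a ^ 3 + b ^ 3) - 4) + δ) / 2) *
          ((((a ^ 3 + b ^ 3) ^ 2 + 4 * (a ^ 3 + b ^ 3) - 4) - δ) / 2) := by
        linear_combination (1/4 : ℂ) * hδ
      rw [h, mul_zero] at h2
      have h16 : (-16 : ℂ) ≠ 0 := by norm_num
      exact (mul_eq_zero.mp h2).resolve_left h16
    · intro habs
      set α := (((a ^ 3 + b ^ 3) ^ 2 + 4 * (a ^ 3 + b ^ 3) - 4) + δ) / 2 with hαdef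
      set β := (((a ^ 3 + b ^ 3) ^ 2 + 4 * (a ^ 3 + b ^ 3) - 4) - δ) / 2 with hβdef
      have hprod : α * β = -16 * (a ^ 3 + b ^ 3) := by
        rw [hαdef, hβdef]; linear_combination (-1/4 : ℂ) * hδ
      have hsum : α + β = (a ^ 3 + b ^ 3) ^ 2 + 4 * (a ^ 3 + b ^ 3) - 4 := by
        rw [hαdef, hβdef]; ring
      have habs16 : ‖(-16 : ℂ)‖ = 16 := by
        rw [show ((-16 : ℂ)) = ((-16 : ℝ) : ℂ) by norm_num, Complex.norm_real]
        norm_num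
      have habsprod : ‖α‖ * ‖β‖ = 32 := by
        rw [← norm_mul, hprod, norm_mul, hYabs, habs16]
        norm_num
      have hα2 : ‖α‖ ^ 2 = 32 := by rw [sq, habs] at *; exact habsprod
      have hβ2 : ‖β‖ ^ 2 = 32 := by rw [← habs]; exact hα2
      have hcα : (starRingEnd ℂ) α * α = 32 := by
        rw [mul_comm, Complex.mul_conj, Complex.normSq_eq_norm_sq, hα2]
        norm_num
      have hcβ : (starRingEnd ℂ) β * β = 32 := by
        rw [mul_comm, Complex.mul_conj, Complex.normSq_eq_norm_sq, hβ2]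
        norm_num
      have hconjY : (starRingEnd ℂ) (a ^ 3 + b ^ 3) * (a ^ 3 + b ^ 3) = 4 := by
        rw [mul_comm, Complex.mul_conj, Complex.normSq_eq_norm_sq, hYabs]
        norm_num
      have hE : (starRingEnd ℂ) (α + β) * (α * β) = 32 * (α + β) := by
        rw [map_add]; linear_combination β * hcα + α * hcβ
      rw [hsum, hprod] at hE
      have hcT : (starRingEnd ℂ) ((a ^ 3 + b ^ 3) ^ 2 + 4 * (a ^ 3 + b ^ 3) - 4) =
          ((starRingEnd ℂ) (a ^ 3 + b ^ 3)) ^ 2 + 4 * (starRingEnd ℂ) (a ^ 3 + b ^ 3) - 4 := by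
        simp [Complex.conj_ofNat]
      rw [hcT] at hE
      have h0 : (a ^ 3 + b ^ 3 + 2) * (a ^ 3 + b ^ 3 - 2 * Complex.I) *
          (a ^ 3 + b ^ 3 + 2 * Complex.I) = 0 := by
        linear_combination (-(a ^ 3 + b ^ 3) / 32) * hE +
          (-((starRingEnd ℂ) (a ^ 3 + b ^ 3) * (a ^ 3 + b ^ 3) + 4) / 2
            - 2 * (a ^ 3 + b ^ 3)) * hconjY +
          (-4 * ((a ^ 3 + b ^ 3) + 2)) * Complex.I_sq
      rcases mul_eq_zero.mp h0 with h1 | h3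
      · rcases mul_eq_zero.mp h1 with h1a | h1b
        · apply hYreal
          have h' : a ^ 3 + b ^ 3 = -2 := by linear_combination h1a
          rw [h']
          simp
        · exact hY1 (by linear_combination h1b)
      · exact hY2 (by linear_combination h3)
  · -- |Y| ≠ 2 : use M₁₁ with eigenvalues Y and -2
    left
    refine ⟨a ^ 3 + b ^ 3, -2, ?_, ?_, hY0, by norm_num, ?_⟩
    · rw [Matrix.trace_fin_two_of]
      linear_combination (-2 : ℂ) * hab
    · rw [Matrix.det_fin_two_of]
      linear_combination (-b ^ 3 + a * b - a ^ 2 * b ^ 2 - a ^ 3) * hab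
    · intro h
      apply hYabs
      rw [h, show ((-2 : ℂ)) = ((-2 : ℝ) : ℂ) by norm_num, Complex.norm_real]
      norm_num
end

section
/- Let a, b ∈ ℂ, set X = ab and Y = a³ + b³, and suppose 4(X−1)²(X+1) = (Y+2)². Then at least one of the matrices M₁₃, M₁₄ has both eigenvalues nonzero and of distinct absolute values, unless X³ + 2X² + X + 2Y = 0, or X³ + 4X² + 2Y − 1 = 0, or both X and Y are real numbers. -/
open Matrix

lemma abs_key (u w : ℂ) (h : ‖u + w‖ = ‖u - w‖) :
    u.re * w.re + u.im * w.im = 0 := by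
  have h2 : Complex.normSq (u + w) = Complex.normSq (u - w) := by
    rw [← Complex.sq_norm, ← Complex.sq_norm, h]
  simp only [Complex.normSq_apply, Complex.add_re, Complex.add_im, Complex.sub_re,
    Complex.sub_im] at h2
  nlinarith [h2]

lemma main_aux (x y t1 t2 d1 d2 : ℂ)
    (h4 : 4 * (x - 1) ^ 2 * (x + 1) = (y + 2) ^ 2)
    (hT : x ^ 3 + 2 * x ^ 2 + x + 2 * y ≠ 0)
    (hU : x ^ 3 + 4 * x ^ 2 + 2 * y - 1 ≠ 0)
    (hreal : ¬ (x.im = 0 ∧ y.im = 0))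
    (ht1 : t1 = 2 * (x * (x - 1) ^ 2))
    (ht2 : t2 = 2 * ((x + 1) * (x - 1) ^ 2))
    (hd1 : d1 = (x - 1) ^ 3 * (x ^ 3 + 2 * x ^ 2 + x + 2 * y))
    (hd2 : d2 = (x - 1) ^ 3 * (x ^ 3 + 4 * x ^ 2 + 2 * y - 1)) :
    (∃ α β : ℂ, α + β = t1 ∧ α * β = d1 ∧ α ≠ 0 ∧ β ≠ 0 ∧
        ‖α‖ ≠ ‖β‖) ∨
    (∃ α β : ℂ, α + β = t2 ∧ α * β = d2 ∧ α ≠ 0 ∧ β ≠ 0 ∧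
        ‖α‖ ≠ ‖β‖) := by
  -- x ≠ 1
  have hx1 : x ≠ 1 := by
    intro h
    subst h
    have h0 : (y + 2) ^ 2 = 0 := by linear_combination -h4
    have hy2 : y = -2 := by
      have := pow_eq_zero_iff (n := 2) (by norm_num) |>.mp h0
      linear_combination this
    exact hreal ⟨by norm_num, by rw [hy2]; norm_num⟩
  have hx1' : x - 1 ≠ 0 := sub_ne_zero.mpr hx1
  -- S ≠ 0
  have hS : 3 * x ^ 2 + x + 2 * y ≠ 0 := by
    intro h
    have key : (x - 1) ^ 2 * (16 * (x + 1) - (3 * x + 4) ^ 2) = 0 := by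
      linear_combination 4 * h4 + (2 * y + 4 - (3 * x + 4) * (x - 1)) * h
    have h9 : x * (9 * x + 8) = 0 := by
      have h' := (mul_eq_zero.mp key).resolve_left (pow_ne_zero 2 hx1')
      linear_combination -h'
    rcases mul_eq_zero.mp h9 with h0 | h8
    · have hy0 : y = 0 := by linear_combination h / 2 - (3 * x + 1) / 2 * h0
      exact hreal ⟨by rw [h0]; norm_num, by rw [hy0]; norm_num⟩
    · have hxv : x = -(8 / 9 : ℝ) := by
        push_cast
        linear_combination h8 / 9
      have hyv : y = -(20 / 27 : ℝ) := by
        push_cast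
        linear_combination h / 2 + (-(1 / 6) * x + 5 / 54) * h8
      exact hreal ⟨by rw [hxv]; simp, by rw [hyv]; simp⟩
  -- square root of the common discriminant (divided by 4)
  obtain ⟨δ, hδ⟩ := IsAlgClosed.exists_pow_nat_eq
    (-((x - 1) ^ 3 * (3 * x ^ 2 + x + 2 * y))) (n := 2) (by norm_num)
  have hδ0 : δ ≠ 0 := by
    intro h
    rw [h] at hδ
    have : (x - 1) ^ 3 * (3 * x ^ 2 + x + 2 * y) = 0 := by linear_combination hδ
    rcases mul_eq_zero.mp this with h' | h'
    · exact pow_ne_zero 3 hx1' h'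
    · exact hS h'
  have hd1ne : d1 ≠ 0 := by rw [hd1]; exact mul_ne_zero (pow_ne_zero 3 hx1') hT
  have hd2ne : d2 ≠ 0 := by rw [hd2]; exact mul_ne_zero (pow_ne_zero 3 hx1') hU
  have hp1 : (x * (x - 1) ^ 2 + δ) * (x * (x - 1) ^ 2 - δ) = d1 := by
    linear_combination -hδ - hd1
  have hp2 : ((x + 1) * (x - 1) ^ 2 + δ) * ((x + 1) * (x - 1) ^ 2 - δ) = d2 := by
    linear_combination -hδ - hd2
  by_cases habs1 : ‖x * (x - 1) ^ 2 + δ‖ = ‖x * (x - 1) ^ 2 - δ‖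
  · -- matrix 13 fails; show matrix 14 succeeds
    right
    refine ⟨(x + 1) * (x - 1) ^ 2 + δ, (x + 1) * (x - 1) ^ 2 - δ, by rw [ht2]; ring, hp2,
      fun h => hd2ne (by rw [← hp2, h, zero_mul]),
      fun h => hd2ne (by rw [← hp2, h, mul_zero]), ?_⟩
    intro habs2
    -- derive contradiction with hreal
    have e1 := abs_key _ _ habs1
    have e2 := abs_key _ _ habs2
    -- coordinates
    rw [Complex.mul_re, Complex.mul_im] at e1 e2
    set zr := ((x - 1) ^ 2).re with hzr
    set zi := ((x - 1) ^ 2).im with hzi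
    have hx1re : (x + 1).re = x.re + 1 := by simp
    have hx1im : (x + 1).im = x.im := by simp
    rw [hx1re, hx1im] at e2
    have e3 : zr * δ.re + zi * δ.im = 0 := by linear_combination e2 - e1
    have e4 : x.im * (zr * δ.im - zi * δ.re) = 0 := by linear_combination e1 - x.re * e3
    have hz : 0 < zr * zr + zi * zi := by
      have := Complex.normSq_pos.mpr (pow_ne_zero 2 hx1')
      rwa [Complex.normSq_apply] at this
    rcases mul_eq_zero.mp e4 with hxim | e5
    · -- x is real; derive that y is real too, contradicting hreal
      have hxr : x = (x.re : ℂ) := by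
        apply Complex.ext
        · simp
        · simp [hxim]
      have hzi0 : zi = 0 := by
        rw [hzi, sq, Complex.mul_im, Complex.sub_im, Complex.sub_re]
        simp [hxim]
      have hzr0 : zr ≠ 0 := by
        intro h
        rw [h, hzi0] at hz
        norm_num at hz
      have hdre : δ.re = 0 := by
        rw [hzi0] at e3
        simp at e3
        rcases e3 with e3 | e3
        · exact absurd e3 hzr0
        · exact e3
      have hδ2 : δ ^ 2 = -(δ.im : ℂ) ^ 2 := by
        apply Complex.ext <;>
          simp [sq, Complex.mul_re, Complex.mul_im, hdre]
      have hA : (x - 1) ^ 3 * (3 * x ^ 2 + x + 2 * y) = (δ.im : ℂ) ^ 2 := by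
        linear_combination hδ - hδ2
      rw [hxr] at hA
      have hre1 : (x.re - 1 : ℝ) ≠ 0 := by
        intro h
        apply hx1
        rw [hxr]
        have hx1'' : (x.re : ℝ) = 1 := by linarith
        rw [hx1'']
        norm_num
      have hc : ((x.re - 1) ^ 3 * 2 : ℝ) ≠ 0 := mul_ne_zero (pow_ne_zero 3 hre1) two_ne_zero
      have hB : (((x.re - 1) ^ 3 * 2 : ℝ) : ℂ) * y =
          ((δ.im ^ 2 - (x.re - 1) ^ 3 * (3 * x.re ^ 2 + x.re) : ℝ) : ℂ) := by
        push_cast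
        linear_combination hA
      have hyim : y.im = 0 := by
        have h' : ((x.re - 1) ^ 3 * 2) * y.im = 0 := by
          have h1 := congrArg Complex.im hB
          rw [Complex.mul_im, Complex.ofReal_re, Complex.ofReal_im, Complex.ofReal_im] at h1
          linarith
        exact (mul_eq_zero.mp h').resolve_left hc
      exact hreal ⟨hxim, hyim⟩
    · -- otherwise δ = 0, contradiction
      have h1 : (zr * zr + zi * zi) * δ.re = 0 := by linear_combination zr * e3 - zi * e5
      have h2 : (zr * zr + zi * zi) * δ.im = 0 := by linear_combination zi * e3 + zr * e5
      apply hδ0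
      apply Complex.ext
      · rcases mul_eq_zero.mp h1 with h | h
        · exact absurd h (ne_of_gt hz)
        · simpa using h
      · rcases mul_eq_zero.mp h2 with h | h
        · exact absurd h (ne_of_gt hz)
        · simpa using h
  · left
    exact ⟨x * (x - 1) ^ 2 + δ, x * (x - 1) ^ 2 - δ, by rw [ht1]; ring, hp1,
      fun h => hd1ne (by rw [← hp1, h, zero_mul]),
      fun h => hd1ne (by rw [← hp1, h, mul_zero]), habs1⟩

theorem stmt_13 (a b X Y : ℂ) (hX : X = a * b) (hY : Y = a ^ 3 + b ^ 3)
    (h4 : 4 * (X - 1) ^ 2 * (X + 1) = (Y + 2) ^ 2)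
    (hT : X ^ 3 + 2 * X ^ 2 + X + 2 * Y ≠ 0)
    (hU : X ^ 3 + 4 * X ^ 2 + 2 * Y - 1 ≠ 0)
    (hreal : ¬ (X.im = 0 ∧ Y.im = 0)) :
    nonzeroDistinctNormEigenvalues
        !![a ^ 6 + 3 * a ^ 3 + 3 * a * b + b ^ 3,
           a ^ 4 + 2 * a ^ 2 * b + a * b ^ 3 + a + b ^ 5 + 2 * b ^ 2;
           a ^ 5 + a ^ 3 * b + 2 * a ^ 2 + 2 * a * b ^ 2 + b ^ 4 + b,
           a ^ 3 + 3 * a * b + b ^ 6 + 3 * b ^ 3] ∨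
      nonzeroDistinctNormEigenvalues
        !![a ^ 6 + 3 * a ^ 3 + a ^ 2 * b ^ 2 + a * b + b ^ 3 + 1,
           a ^ 4 + 2 * a ^ 2 * b + a * b ^ 3 + a + b ^ 5 + 2 * b ^ 2;
           a ^ 5 + a ^ 3 * b + 2 * a ^ 2 + 2 * a * b ^ 2 + b ^ 4 + b,
           a ^ 3 + a ^ 2 * b ^ 2 + a * b + b ^ 6 + 3 * b ^ 3 + 1] := by
  subst hX hY
  have ht1 : Matrix.trace
      !![a ^ 6 + 3 * a ^ 3 + 3 * a * b + b ^ 3,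
         a ^ 4 + 2 * a ^ 2 * b + a * b ^ 3 + a + b ^ 5 + 2 * b ^ 2;
         a ^ 5 + a ^ 3 * b + 2 * a ^ 2 + 2 * a * b ^ 2 + b ^ 4 + b,
         a ^ 3 + 3 * a * b + b ^ 6 + 3 * b ^ 3] = 2 * (a * b * (a * b - 1) ^ 2) := by
    rw [Matrix.trace_fin_two_of]
    linear_combination -h4
  have ht2 : Matrix.trace
      !![a ^ 6 + 3 * a ^ 3 + a ^ 2 * b ^ 2 + a * b + b ^ 3 + 1,
         a ^ 4 + 2 * a ^ 2 * b + a * b ^ 3 + a + b ^ 5 + 2 * b ^ 2;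
         a ^ 5 + a ^ 3 * b + 2 * a ^ 2 + 2 * a * b ^ 2 + b ^ 4 + b,
         a ^ 3 + a ^ 2 * b ^ 2 + a * b + b ^ 6 + 3 * b ^ 3 + 1] =
      2 * ((a * b + 1) * (a * b - 1) ^ 2) := by
    rw [Matrix.trace_fin_two_of]
    linear_combination -h4
  have hd1 : Matrix.det
      !![a ^ 6 + 3 * a ^ 3 + 3 * a * b + b ^ 3,
         a ^ 4 + 2 * a ^ 2 * b + a * b ^ 3 + a + b ^ 5 + 2 * b ^ 2;
         a ^ 5 + a ^ 3 * b + 2 * a ^ 2 + 2 * a * b ^ 2 + b ^ 4 + b,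
         a ^ 3 + 3 * a * b + b ^ 6 + 3 * b ^ 3] =
      (a * b - 1) ^ 3 *
        ((a * b) ^ 3 + 2 * (a * b) ^ 2 + a * b + 2 * (a ^ 3 + b ^ 3)) := by
    rw [Matrix.det_fin_two_of]
    ring
  have hd2 : Matrix.det
      !![a ^ 6 + 3 * a ^ 3 + a ^ 2 * b ^ 2 + a * b + b ^ 3 + 1,
         a ^ 4 + 2 * a ^ 2 * b + a * b ^ 3 + a + b ^ 5 + 2 * b ^ 2;
         a ^ 5 + a ^ 3 * b + 2 * a ^ 2 + 2 * a * b ^ 2 + b ^ 4 + b,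
         a ^ 3 + a ^ 2 * b ^ 2 + a * b + b ^ 6 + 3 * b ^ 3 + 1] =
      (a * b - 1) ^ 3 *
        ((a * b) ^ 3 + 4 * (a * b) ^ 2 + 2 * (a ^ 3 + b ^ 3) - 1) := by
    rw [Matrix.det_fin_two_of]
    linear_combination -(a * b - 1) ^ 2 * h4
  rcases main_aux (a * b) (a ^ 3 + b ^ 3) _ _ _ _ h4 hT hU hreal ht1 ht2 hd1 hd2 with h | h
  · exact Or.inl h
  · exact Or.inr h
end

section
/- Let a, b ∈ ℂ, set X = ab and Y = a³ + b³, and suppose X² + X + Y ≠ 0, 4(X−1)²(X+1) = (Y+2)², and either X³ + 2X² + X + 2Y = 0 or X³ + 4X² + 2Y − 1 = 0. Then at least one of the matrices M₁₅, M₁₆ has both eigenvalues nonzero and of distinct absolute values, unless both X and Y are real numbers. -/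
open Matrix

private lemma aux_main (A : Matrix (Fin 2) (Fin 2) ℂ) (s p sb pb sbZ pbZ R Q : ℂ)
    (htr : A.trace = s) (hdet : A.det = p)
    (hs : s = sb) (hp : p = pb)
    (hcs : (starRingEnd ℂ) sb = sbZ) (hcp : (starRingEnd ℂ) pb = pbZ)
    (hcert : (sb ^ 2 * pbZ - sbZ ^ 2 * pb) * R = 1)
    (hQ : pb * Q = 1) :
    nonzeroDistinctNormEigenvalues A := by
  have hpne : p ≠ 0 := by
    rw [hp]; intro h; rw [h, zero_mul] at hQ; exact one_ne_zero hQ.symm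
  obtain ⟨d, hd⟩ := IsAlgClosed.exists_pow_nat_eq (s ^ 2 - 4 * p) zero_lt_two
  set α := (s + d) / 2 with hα
  set β := (s - d) / 2 with hβ
  have hsum : α + β = s := by rw [hα, hβ]; ring
  have hprod : α * β = p := by rw [hα, hβ]; linear_combination (-1/4 : ℂ) * hd
  have hαne : α ≠ 0 := by intro h; apply hpne; rw [← hprod, h, zero_mul]
  have hβne : β ≠ 0 := by intro h; apply hpne; rw [← hprod, h, mul_zero]
  refine ⟨α, β, by rw [htr, hsum], by rw [hdet, hprod], hαne, hβne, ?_⟩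
  intro heq
  have h1 : α * (starRingEnd ℂ) α = (Complex.normSq α : ℂ) := Complex.mul_conj α
  have hns : Complex.normSq β = Complex.normSq α := by
    rw [← Complex.sq_norm, ← Complex.sq_norm, heq]
  have h2 : β * (starRingEnd ℂ) β = (Complex.normSq α : ℂ) := by
    rw [Complex.mul_conj, hns]
  have hi : (starRingEnd ℂ) s * p = (Complex.normSq α : ℂ) * s := by
    rw [← hsum, ← hprod, map_add]
    linear_combination β * h1 + α * h2
  have hii : s * (starRingEnd ℂ) p = (Complex.normSq α : ℂ) * (starRingEnd ℂ) s := by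
    have h3 := congrArg (starRingEnd ℂ) hi
    simpa [_root_.map_mul, Complex.conj_conj, Complex.conj_ofReal] using h3
  have hF0 : s ^ 2 * (starRingEnd ℂ) p - ((starRingEnd ℂ) s) ^ 2 * p = 0 := by
    linear_combination s * hii - (starRingEnd ℂ) s * hi
  rw [hs, hp, hcs, hcp] at hF0
  rw [hF0, zero_mul] at hcert
  exact one_ne_zero hcert.symm

theorem stmt_14 (a b X Y : ℂ) (hX : X = a * b) (hY : Y = a ^ 3 + b ^ 3)
    (hXY : X ^ 2 + X + Y ≠ 0)
    (h4 : 4 * (X - 1) ^ 2 * (X + 1) = (Y + 2) ^ 2)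
    (hTU : X ^ 3 + 2 * X ^ 2 + X + 2 * Y = 0 ∨ X ^ 3 + 4 * X ^ 2 + 2 * Y - 1 = 0)
    (hreal : ¬ (X.im = 0 ∧ Y.im = 0)) :
    nonzeroDistinctNormEigenvalues
        !![a ^ 6 + a ^ 4 * b + 2 * a ^ 3 + a ^ 2 * b ^ 2 + 2 * a * b + b ^ 3,
           a ^ 4 + 3 * a ^ 2 * b + 2 * a * b ^ 3 + b ^ 5 + b ^ 2;
           a ^ 5 + 2 * a ^ 3 * b + a ^ 2 + 3 * a * b ^ 2 + b ^ 4,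
           a ^ 3 + a ^ 2 * b ^ 2 + a * b ^ 4 + 2 * a * b + b ^ 6 + 2 * b ^ 3] ∨
      nonzeroDistinctNormEigenvalues
        !![a ^ 6 + a ^ 4 * b + 2 * a ^ 3 + a ^ 2 * b ^ 2 + 2 * a * b + b ^ 3,
           a ^ 4 + a ^ 3 * b ^ 2 + a ^ 2 * b + 2 * a * b ^ 3 + a + b ^ 5 + b ^ 2;
           a ^ 5 + 2 * a ^ 3 * b + a ^ 2 * b ^ 3 + a ^ 2 + a * b ^ 2 + b ^ 4 + b,
           a ^ 3 + a ^ 2 * b ^ 2 + a * b ^ 4 + 2 * a * b + b ^ 6 + 2 * b ^ 3] := by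
  left
  have htr : Matrix.trace (!![a ^ 6 + a ^ 4 * b + 2 * a ^ 3 + a ^ 2 * b ^ 2 + 2 * a * b + b ^ 3,
           a ^ 4 + 3 * a ^ 2 * b + 2 * a * b ^ 3 + b ^ 5 + b ^ 2;
           a ^ 5 + 2 * a ^ 3 * b + a ^ 2 + 3 * a * b ^ 2 + b ^ 4,
           a ^ 3 + a ^ 2 * b ^ 2 + a * b ^ 4 + 2 * a * b + b ^ 6 + 2 * b ^ 3]) = (Y^2 + X*Y - 2*X^3 + 2*X^2 + 4*X + 3*Y) := by
    rw [Matrix.trace_fin_two_of, hX, hY]; ring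
  have hdet : Matrix.det (!![a ^ 6 + a ^ 4 * b + 2 * a ^ 3 + a ^ 2 * b ^ 2 + 2 * a * b + b ^ 3,
           a ^ 4 + 3 * a ^ 2 * b + 2 * a * b ^ 3 + b ^ 5 + b ^ 2;
           a ^ 5 + 2 * a ^ 3 * b + a ^ 2 + 3 * a * b ^ 2 + b ^ 4,
           a ^ 3 + a ^ 2 * b ^ 2 + a * b ^ 4 + 2 * a * b + b ^ 6 + 2 * b ^ 3]) = (X^6 - 2*X^5 + 4*X^4 - 6*X^3 + 3*X^2 + (X^4 + X^3 - 5*X^2 + 3*X)*Y + (X^2 - 2*X + 1)*Y^2) := by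
    rw [Matrix.det_fin_two_of, hX, hY]; ring
  obtain hT | hT := hTU
  · have hY2 : Y + (X^3 + 2*X^2 + X)/2 = 0 := by linear_combination (1/2 : ℂ) * hT
    have hfac : X^2 + X + Y = X * (1 - X) * (1 + X) / 2 := by linear_combination hY2
    have h1 : X ≠ 1 := by intro h; exact hXY (by rw [hfac, h]; ring)
    have h0 : X ≠ 0 := by intro h; exact hXY (by rw [hfac, h]; ring)
    have key : (X - 1)^2 * (X * (X^3 + 6*X^2 + 17*X + 8)) = 0 := by
      linear_combination (-4 : ℂ) * h4 + ((-4 : ℂ) * Y + (2 : ℂ) * X^3 + (4 : ℂ) * X^2 + (2 : ℂ) * X + (-16 : ℂ)) * hY2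
    have hC : X^3 + 6*X^2 + 17*X + 8 = 0 := by
      rcases mul_eq_zero.mp key with h | h
      · exact absurd h (pow_ne_zero 2 (sub_ne_zero.mpr h1))
      rcases mul_eq_zero.mp h with h | h
      · exact absurd h h0
      · exact h
    have him : X.im ≠ 0 := by
      intro h
      apply hreal
      refine ⟨h, ?_⟩
      have hcx : (starRingEnd ℂ) X = X := Complex.conj_eq_iff_im.mpr h
      have h2 := congrArg (starRingEnd ℂ) hY2
      simp only [map_add, map_div₀, _root_.map_mul, map_pow, map_ofNat, map_sub, _root_.map_one, map_zero,
        hcx] at h2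
      have : (starRingEnd ℂ) Y = Y := by linear_combination h2 - hY2
      exact Complex.conj_eq_iff_im.mp this
    set Z : ℂ := (starRingEnd ℂ) X with hZdef
    set W : ℂ := (starRingEnd ℂ) Y with hWdef
    have hCZ : Z^3 + 6*Z^2 + 17*Z + 8 = 0 := by
      have h2 := congrArg (starRingEnd ℂ) hC
      simp only [map_add, _root_.map_mul, map_pow, map_ofNat, map_zero, ← hZdef] at h2
      linear_combination h2
    have hW : W + (Z^3 + 2*Z^2 + Z)/2 = 0 := by
      have h2 := congrArg (starRingEnd ℂ) hY2
      simp only [map_add, map_div₀, _root_.map_mul, map_pow, map_ofNat, map_sub, _root_.map_one, map_zero,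
        ← hZdef, ← hWdef] at h2
      linear_combination h2
    have hXZ : X - Z ≠ 0 := by
      intro h
      have hzx : (starRingEnd ℂ) X = X := by rw [← hZdef]; linear_combination -h
      exact him (Complex.conj_eq_iff_im.mp hzx)
    have hE : Z^2 + (X + 6)*Z + (X^2 + 6*X + 17) = 0 := by
      have hprod : (X - Z) * (Z^2 + (X + 6)*Z + (X^2 + 6*X + 17)) = 0 := by linear_combination hC - hCZ
      exact (mul_eq_zero.mp hprod).resolve_left hXZ
    have hs : (Y^2 + X*Y - 2*X^3 + 2*X^2 + 4*X + 3*Y) = (-20 : ℂ) * X^2 + (-72 : ℂ) * X + (-36 : ℂ) := by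
      linear_combination ((1 : ℂ) * Y + (-1/2 : ℂ) * X^3 + (-1 : ℂ) * X^2 + (1/2 : ℂ) * X + (3 : ℂ)) * hY2 + ((1/4 : ℂ) * X^3 + (-1/2 : ℂ) * X^2 + (-1/4 : ℂ) * X + (9/2 : ℂ)) * hC
    have hp : (X^6 - 2*X^5 + 4*X^4 - 6*X^3 + 3*X^2 + (X^4 + X^3 - 5*X^2 + 3*X)*Y + (X^2 - 2*X + 1)*Y^2) = (-656 : ℂ) * X^2 + (-3296 : ℂ) * X + (-1680 : ℂ) := by
      linear_combination ((1 : ℂ) * Y * X^2 + (-2 : ℂ) * Y * X + (1 : ℂ) * Y + (-1/2 : ℂ) * X^5 + (1 : ℂ) * X^4 + (2 : ℂ) * X^3 + (-5 : ℂ) * X^2 + (5/2 : ℂ) * X) * hY2 + ((1/4 : ℂ) * X^5 + (-3/2 : ℂ) * X^4 + (4 : ℂ) * X^3 + (-5/2 : ℂ) * X^2 + (-137/4 : ℂ) * X + (210 : ℂ)) * hC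
    have hcs : (starRingEnd ℂ) ((-20 : ℂ) * X^2 + (-72 : ℂ) * X + (-36 : ℂ)) = (-20 : ℂ) * Z^2 + (-72 : ℂ) * Z + (-36 : ℂ) := by
      simp only [map_add, _root_.map_mul, map_pow, map_ofNat, map_neg, _root_.map_one, map_div₀, ← hZdef]
    have hcp : (starRingEnd ℂ) ((-656 : ℂ) * X^2 + (-3296 : ℂ) * X + (-1680 : ℂ)) = (-656 : ℂ) * Z^2 + (-3296 : ℂ) * Z + (-1680 : ℂ) := by
      simp only [map_add, _root_.map_mul, map_pow, map_ofNat, map_neg, _root_.map_one, map_div₀, ← hZdef]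
    have hcert : (((-20 : ℂ) * X^2 + (-72 : ℂ) * X + (-36 : ℂ)) ^ 2 * ((-656 : ℂ) * Z^2 + (-3296 : ℂ) * Z + (-1680 : ℂ)) - ((-20 : ℂ) * Z^2 + (-72 : ℂ) * Z + (-36 : ℂ)) ^ 2 * ((-656 : ℂ) * X^2 + (-3296 : ℂ) * X + (-1680 : ℂ))) * ((1273/1342177280 : ℂ) * Z * X^2 + (3017/805306368 : ℂ) * Z * X + (1191/167772160 : ℂ) * Z + (907/503316480 : ℂ) * X^2 + (623/167772160 : ℂ) * X + (145/12582912 : ℂ)) = 1 := by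
      linear_combination ((260965/1048576 : ℂ) * Z^3 * X^4 + (7025995/3145728 : ℂ) * Z^3 * X^3 + (23402245/3145728 : ℂ) * Z^3 * X^2 + (12453715/1048576 : ℂ) * Z^3 * X + (625275/131072 : ℂ) * Z^3 + (-260965/1048576 : ℂ) * Z^2 * X^5 + (-4599041/3145728 : ℂ) * Z^2 * X^4 + (-4432211/3145728 : ℂ) * Z^2 * X^3 + (19443509/3145728 : ℂ) * Z^2 * X^2 + (42734287/1572864 : ℂ) * Z^2 * X + (882665/65536 : ℂ) * Z^2 + (-260965/1048576 : ℂ) * Z * X^6 + (-3718741/1048576 : ℂ) * Z * X^5 + (-64256297/3145728 : ℂ) * Z * X^4 + (-201383509/3145728 : ℂ) * Z * X^3 + (-480566681/3932160 : ℂ) * Z * X^2 + (-1807283/16384 : ℂ) * Z * X + (-679713/20480 : ℂ) * Z + (260965/524288 : ℂ) * X^7 + (3288159/524288 : ℂ) * X^6 + (39631679/1048576 : ℂ) * X^5 + (444368113/3145728 : ℂ) * X^4 + (1787949023/5242880 : ℂ) * X^3 + (8216012629/15728640 : ℂ) * X^2 + (412418407/983040 : ℂ) * X + (1967951/16384 :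 ℂ)) * hE + ((-260965/1048576 : ℂ) * Z * X^5 + (-2857577/1048576 : ℂ) * Z * X^4 + (-12499655/1048576 : ℂ) * Z * X^3 + (-31911459/1048576 : ℂ) * Z * X^2 + (-29010889/655360 : ℂ) * Z * X + (-2157249/163840 : ℂ) * Z + (-260965/524288 : ℂ) * X^6 + (-3288159/524288 : ℂ) * X^5 + (-39631679/1048576 : ℂ) * X^4 + (-435651193/3145728 : ℂ) * X^3 + (-1670861303/5242880 : ℂ) * X^2 + (-7004442253/15728640 : ℂ) * X + (-33471551/131072 : ℂ)) * hC
    have hQ : ((-656 : ℂ) * X^2 + (-3296 : ℂ) * X + (-1680 : ℂ)) * ((501/14336 : ℂ) * X^2 + (2717/14336 : ℂ) * X + (869/1792 : ℂ)) = 1 := by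
      linear_combination ((-20541/896 : ℂ) * X + (-13051/128 : ℂ)) * hC
    exact aux_main _ _ _ _ _ _ _ _ _ htr hdet hs hp hcs hcp hcert hQ
  · have hY2 : Y + (X^3 + 4*X^2 - 1)/2 = 0 := by linear_combination (1/2 : ℂ) * hT
    have hfac : X^2 + X + Y = -(X - 1) * (X^2 + 3*X + 1) / 2 := by linear_combination hY2
    have h1 : X ≠ 1 := by intro h; exact hXY (by rw [hfac, h]; ring)
    have key : (X - 1)^2 * (X^4 + 10*X^3 + 35*X^2 + 34*X + 9) = 0 := by
      linear_combination (-4 : ℂ) * h4 + ((-4 : ℂ) * Y + (2 : ℂ) * X^3 + (8 : ℂ) * X^2 + (-18 : ℂ)) * hY2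
    have hC : X^4 + 10*X^3 + 35*X^2 + 34*X + 9 = 0 := by
      rcases mul_eq_zero.mp key with h | h
      · exact absurd h (pow_ne_zero 2 (sub_ne_zero.mpr h1))
      · exact h
    have him : X.im ≠ 0 := by
      intro h
      apply hreal
      refine ⟨h, ?_⟩
      have hcx : (starRingEnd ℂ) X = X := Complex.conj_eq_iff_im.mpr h
      have h2 := congrArg (starRingEnd ℂ) hY2
      simp only [map_add, map_div₀, _root_.map_mul, map_pow, map_ofNat, map_sub, _root_.map_one, map_zero,
        hcx] at h2
      have : (starRingEnd ℂ) Y = Y := by linear_combination h2 - hY2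
      exact Complex.conj_eq_iff_im.mp this
    set Z : ℂ := (starRingEnd ℂ) X with hZdef
    set W : ℂ := (starRingEnd ℂ) Y with hWdef
    have hCZ : Z^4 + 10*Z^3 + 35*Z^2 + 34*Z + 9 = 0 := by
      have h2 := congrArg (starRingEnd ℂ) hC
      simp only [map_add, _root_.map_mul, map_pow, map_ofNat, map_zero, ← hZdef] at h2
      linear_combination h2
    have hW : W + (Z^3 + 4*Z^2 - 1)/2 = 0 := by
      have h2 := congrArg (starRingEnd ℂ) hY2
      simp only [map_add, map_div₀, _root_.map_mul, map_pow, map_ofNat, map_sub, _root_.map_one, map_zero,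
        ← hZdef, ← hWdef] at h2
      linear_combination h2
    have hXZ : X - Z ≠ 0 := by
      intro h
      have hzx : (starRingEnd ℂ) X = X := by rw [← hZdef]; linear_combination -h
      exact him (Complex.conj_eq_iff_im.mp hzx)
    have hE : Z^3 + (X + 10)*Z^2 + (X^2 + 10*X + 35)*Z + (X^3 + 10*X^2 + 35*X + 34) = 0 := by
      have hprod : (X - Z) * (Z^3 + (X + 10)*Z^2 + (X^2 + 10*X + 35)*Z + (X^3 + 10*X^2 + 35*X + 34)) = 0 := by linear_combination hC - hCZ
      exact (mul_eq_zero.mp hprod).resolve_left hXZ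
    have hs : (Y^2 + X*Y - 2*X^3 + 2*X^2 + 4*X + 3*Y) = (11/2 : ℂ) * X^3 + (35/2 : ℂ) * X^2 + (35/2 : ℂ) * X + (4 : ℂ) := by
      linear_combination ((1 : ℂ) * Y + (-1/2 : ℂ) * X^3 + (-2 : ℂ) * X^2 + (1 : ℂ) * X + (7/2 : ℂ)) * hY2 + ((1/4 : ℂ) * X^2 + (-1/2 : ℂ) * X + (-1/4 : ℂ)) * hC
    have hp : (X^6 - 2*X^5 + 4*X^4 - 6*X^3 + 3*X^2 + (X^4 + X^3 - 5*X^2 + 3*X)*Y + (X^2 - 2*X + 1)*Y^2) = (28 : ℂ) * X^3 + (-1223/2 : ℂ) * X^2 + (-1769/2 : ℂ) * X + (-535/2 : ℂ) := by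
      linear_combination ((1 : ℂ) * Y * X^2 + (-2 : ℂ) * Y * X + (1 : ℂ) * Y + (-1/2 : ℂ) * X^5 + (9/2 : ℂ) * X^3 + (-13/2 : ℂ) * X^2 + (2 : ℂ) * X + (1/2 : ℂ)) * hY2 + ((1/4 : ℂ) * X^4 + (-3/2 : ℂ) * X^3 + (5 : ℂ) * X^2 + (-14 : ℂ) * X + (119/4 : ℂ)) * hC
    have hcs : (starRingEnd ℂ) ((11/2 : ℂ) * X^3 + (35/2 : ℂ) * X^2 + (35/2 : ℂ) * X + (4 : ℂ)) = (11/2 : ℂ) * Z^3 + (35/2 : ℂ) * Z^2 + (35/2 : ℂ) * Z + (4 : ℂ) := by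
      simp only [map_add, _root_.map_mul, map_pow, map_ofNat, map_neg, _root_.map_one, map_div₀, ← hZdef]
    have hcp : (starRingEnd ℂ) ((28 : ℂ) * X^3 + (-1223/2 : ℂ) * X^2 + (-1769/2 : ℂ) * X + (-535/2 : ℂ)) = (28 : ℂ) * Z^3 + (-1223/2 : ℂ) * Z^2 + (-1769/2 : ℂ) * Z + (-535/2 : ℂ) := by
      simp only [map_add, _root_.map_mul, map_pow, map_ofNat, map_neg, _root_.map_one, map_div₀, ← hZdef]
    have hcert : (((11/2 : ℂ) * X^3 + (35/2 : ℂ) * X^2 + (35/2 : ℂ) * X + (4 : ℂ)) ^ 2 * ((28 : ℂ) * Z^3 + (-1223/2 : ℂ) * Z^2 + (-1769/2 : ℂ) * Z + (-535/2 : ℂ)) - ((11/2 : ℂ) * Z^3 + (35/2 : ℂ) * Z^2 + (35/2 : ℂ) * Z + (4 : ℂ)) ^ 2 * ((28 : ℂ) * X^3 + (-1223/2 : ℂ) * X^2 + (-1769/2 : ℂ) * X + (-535/2 : ℂ))) * ((1188464133/666573568384 : ℂ) * Z^2 * X^3 + (33292901641/1999720705152 : ℂ) * Z^2 * X^2 +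 (102919273817/1999720705152 : ℂ) * Z^2 * X + (27296258243/999860352576 : ℂ) * Z^2 + (7732969823/499930176288 : ℂ) * Z * X^3 + (144418544573/999860352576 : ℂ) * Z * X^2 + (446442033521/999860352576 : ℂ) * Z * X + (78936924297/333286784192 : ℂ) * Z + (82437570043/1999720705152 : ℂ) * X^3 + (32074299331/83321696048 : ℂ) * X^2 + (594901218533/499930176288 : ℂ) * X + (1262245233917/1999720705152 : ℂ)) = 1 := by
      linear_combination ((-1006629120651/666573568384 : ℂ) * Z^5 * X^6 + (302024761861801/15997765641216 : ℂ) * Z^5 * X^5 + (2496285570884831/7998882820608 : ℂ) * Z^5 * X^4 + (22217501985855649/15997765641216 : ℂ) * Z^5 * X^3 + (16131873998066453/7998882820608 : ℂ) * Z^5 * X^2 + (18347952751855309/15997765641216 : ℂ) * Z^5 * X + (1767023277360605/7998882820608 : ℂ) * Z^5 + (1006629120651/666573568384 : ℂ) * Z^4 * X^7 + (-423767907233033/15997765641216 : ℂ) * Z^4 * X^6 + (-1735305412935281/7998882820608 : ℂ) * Z^4 * X^5 + (2941428217643905/15997765641216 : ℂ) * Z^4 * X^4 + (13282567381850327/2666294273536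 : ℂ) * Z^4 * X^3 + (48078691701267975/5332588547072 : ℂ) * Z^4 * X^2 + (44462596794884609/7998882820608 : ℂ) * Z^4 * X + (8904406192696685/7998882820608 : ℂ) * Z^4 + (3804473292851/499930176288 : ℂ) * Z^3 * X^7 + (-145805470778219/1333147136768 : ℂ) * Z^3 * X^6 + (-22312222728189469/15997765641216 : ℂ) * Z^3 * X^5 + (-64903755121318481/15997765641216 : ℂ) * Z^3 * X^4 + (15604198602841637/5332588547072 : ℂ) * Z^3 * X^3 + (70540244370246897/5332588547072 : ℂ) * Z^3 * X^2 + (51705988492089301/5332588547072 : ℂ) * Z^3 * X + (33308045391755795/15997765641216 : ℂ) * Z^3 + (1006629120651/666573568384 : ℂ) * Z^2 * X^9 + (47416552720537/1999720705152 : ℂ) * Z^2 * X^8 + (344875236299965/1999720705152 : ℂ) * Z^2 * X^7 + (6029628684803827/15997765641216 : ℂ) * Z^2 * X^6 + (-25760168674529219/15997765641216 : ℂ) * Z^2 * X^5 + (-148501340382307249/15997765641216 : ℂ) * Z^2 * X^4 + (-41167544365375933/5332588547072 : ℂ) * Z^2 * X^3 + (23325365089092821/5332588547072 : ℂ) * Z^2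 * X^2 + (101898988506871501/15997765641216 : ℂ) * Z^2 * X + (3229600264058293/1999720705152 : ℂ) * Z^2 + (-1006629120651/333286784192 : ℂ) * Z * X^10 + (-2287793456025/41660848024 : ℂ) * Z * X^9 + (-1383592288013459/5332588547072 : ℂ) * Z * X^8 + (1797775939782659/1999720705152 : ℂ) * Z * X^7 + (208230609323911177/15997765641216 : ℂ) * Z * X^6 + (788089849219291249/15997765641216 : ℂ) * Z * X^5 + (1371903475230703375/15997765641216 : ℂ) * Z * X^4 + (438607820913636111/5332588547072 : ℂ) * Z * X^3 + (93337702120619875/1999720705152 : ℂ) * Z * X^2 + (238528404316675001/15997765641216 : ℂ) * Z * X + (5421865306078191/2666294273536 : ℂ) * Z + (1006629120651/666573568384 : ℂ) * X^11 + (25792837872263/666573568384 : ℂ) * X^10 + (644139682571473/7998882820608 : ℂ) * X^9 + (-59306772483133673/15997765641216 : ℂ) * X^8 + (-639066193397112787/15997765641216 : ℂ) * X^7 + (-253304982180119887/1333147136768 : ℂ) * X^6 + (-2660684715190273353/5332588547072 : ℂ) * X^5 + (-2015301827813008765/2666294273536 : ℂ) * X^4 + (-10706670278822194849/15997765641216 :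 ℂ) * X^3 + (-5431444476525609817/15997765641216 : ℂ) * X^2 + (-121202477853285909/1333147136768 : ℂ) * X + (-26468015912596027/2666294273536 : ℂ)) * hE + ((-7490490224063/999860352576 : ℂ) * Z^2 * X^7 + (11434506865597/192744164352 : ℂ) * Z^2 * X^6 + (2686060306804503/1333147136768 : ℂ) * Z^2 * X^5 + (38460110915123891/2666294273536 : ℂ) * Z^2 * X^4 + (347387118108443069/7998882820608 : ℂ) * Z^2 * X^3 + (144517300037072445/2666294273536 : ℂ) * Z^2 * X^2 + (9561697337364645/333286784192 : ℂ) * Z^2 * X + (28367690005750139/5332588547072 : ℂ) * Z^2 + (1006629120651/666573568384 : ℂ) * Z * X^9 + (10811857424137/666573568384 : ℂ) * Z * X^8 + (2862497498897431/15997765641216 : ℂ) * Z * X^7 + (45745974327323617/15997765641216 : ℂ) * Z * X^6 + (423802959626293715/15997765641216 : ℂ) * Z * X^5 + (2026110726273773801/15997765641216 : ℂ) * Z * X^4 + (4982130540852848521/15997765641216 : ℂ) * Z * X^3 + (5682334239144723593/15997765641216 : ℂ) * Z * X^2 + (719209217014908977/3999441410304 : ℂ) * Z * X + (260415840826866713/7998882820608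 : ℂ) * Z + (-1006629120651/666573568384 : ℂ) * X^10 + (-25792837872263/666573568384 : ℂ) * X^9 + (-644139682571473/7998882820608 : ℂ) * X^8 + (59306772483133673/15997765641216 : ℂ) * X^7 + (639283625287173403/15997765641216 : ℂ) * X^6 + (3037720124144507687/15997765641216 : ℂ) * X^5 + (7921643092482465893/15997765641216 : ℂ) * X^4 + (11663512448145102949/15997765641216 : ℂ) * X^3 + (3138908957511903181/5332588547072 : ℂ) * X^2 + (1909759712748349579/7998882820608 : ℂ) * X + (49994993040777299/1333147136768 : ℂ)) * hC
    have hQ : ((28 : ℂ) * X^3 + (-1223/2 : ℂ) * X^2 + (-1769/2 : ℂ) * X + (-535/2 : ℂ)) * ((681500657/6148739618 : ℂ) * X^3 + (6537218235/6148739618 : ℂ) * X^2 + (21177090549/6148739618 : ℂ) * X + (7223012170/3074369809 : ℂ)) = 1 := by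
      linear_combination ((1363001314/439195687 : ℂ) * X^2 + (-849031450271/12297479236 : ℂ) * X + (-215025569476/3074369809 : ℂ)) * hC
    exact aux_main _ _ _ _ _ _ _ _ _ htr hdet hs hp hcs hcp hcert hQ
end

section
/- Let a, b ∈ ℂ with ab ≠ 0, ab ≠ 1, and a³ ≠ b³. Let F be the 2×3 complex matrix [[a, 0, 1],[1, 0, b]] and M₄ the 3×3 complex matrix [[a³, 2a, b],[a², ab+1, b²],[a, 2b, b³]]. Then each of the three matrices F, F·M₄, F·M₄² has rank 2, and the intersection of the row spaces of F, F·M₄, and F·M₄² is the zero subspace of ℂ³. -/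
open Matrix

/-- If both rows of `X` are orthogonal to `(n0, n1, n2)`, then so is every element of the
row space of `X`. -/
lemma dot_zero_of_mem_rowSpace (X : Matrix (Fin 2) (Fin 3) ℂ) (n0 n1 n2 : ℂ)
    (h0 : X 0 0 * n0 + X 0 1 * n1 + X 0 2 * n2 = 0)
    (h1 : X 1 0 * n0 + X 1 1 * n1 + X 1 2 * n2 = 0)
    {v : Fin 3 → ℂ} (hv : v ∈ rowSpace X) :
    v 0 * n0 + v 1 * n1 + v 2 * n2 = 0 := by
  let φ : (Fin 3 → ℂ) →ₗ[ℂ] ℂ :=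
    { toFun := fun w => w 0 * n0 + w 1 * n1 + w 2 * n2
      map_add' := fun x y => by simp [Pi.add_apply]; ring
      map_smul' := fun c x => by simp [Pi.smul_apply, smul_eq_mul]; ring }
  have hle : rowSpace X ≤ LinearMap.ker φ := by
    rw [rowSpace, Submodule.span_le]
    rintro _ ⟨i, rfl⟩
    fin_cases i
    · simpa [φ] using h0
    · simpa [φ] using h1
  exact hle hv

theorem stmt_16 (a b : ℂ) (hab0 : a * b ≠ 0) (hab1 : a * b ≠ 1) (hab3 : a ^ 3 ≠ b ^ 3)
    (F : Matrix (Fin 2) (Fin 3) ℂ) (hF : F = !![a, 0, 1; 1, 0, b])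
    (M₄ : Matrix (Fin 3) (Fin 3) ℂ)
    (hM₄ : M₄ = !![a ^ 3, 2 * a, b; a ^ 2, a * b + 1, b ^ 2; a, 2 * b, b ^ 3]) :
    F.rank = 2 ∧ (F * M₄).rank = 2 ∧ (F * M₄ ^ 2).rank = 2 ∧
    rowSpace F ⊓ rowSpace (F * M₄) ⊓ rowSpace (F * M₄ ^ 2) = ⊥ := by
  have ha : a ≠ 0 := fun h => hab0 (by rw [h, zero_mul])
  have hb : b ≠ 0 := fun h => hab0 (by rw [h, mul_zero])
  have h1 : a * b - 1 ≠ 0 := sub_ne_zero.mpr hab1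
  have h3 : a ^ 3 - b ^ 3 ≠ 0 := sub_ne_zero.mpr hab3
  -- M₄ has unit determinant
  have hdetval : M₄.det = a * b * (a * b - 1) ^ 3 := by
    rw [hM₄, Matrix.det_fin_three]
    simp
    ring
  have hdet : IsUnit M₄.det := by
    rw [hdetval]
    exact isUnit_iff_ne_zero.mpr (mul_ne_zero hab0 (pow_ne_zero 3 h1))
  have hdet2 : IsUnit (M₄ ^ 2).det := by
    rw [Matrix.det_pow]
    exact hdet.pow 2
  -- explicit products
  have hFM : F * M₄ = !![a ^ 4 + a, 2 * a ^ 2 + 2 * b, a * b + b ^ 3;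
      a ^ 3 + a * b, 2 * a + 2 * b ^ 2, b ^ 4 + b] := by
    subst hF hM₄
    ext i j
    fin_cases i <;> fin_cases j <;>
      simp [Matrix.mul_apply, Fin.sum_univ_succ] <;> ring
  have hFM2 : F * M₄ ^ 2 =
      !![a ^ 7 + 3 * a ^ 4 + 3 * a ^ 2 * b + a * b ^ 3,
         2 * a ^ 5 + 2 * a ^ 3 * b + 4 * a ^ 2 + 4 * a * b ^ 2 + 2 * b + 2 * b ^ 4,
         a ^ 4 * b + 2 * a ^ 2 * b ^ 2 + a * b ^ 4 + a * b + b ^ 6 + 2 * b ^ 3;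
         a ^ 6 + a ^ 4 * b + 2 * a ^ 3 + 2 * a ^ 2 * b ^ 2 + a * b ^ 4 + a * b,
         2 * a ^ 4 + 4 * a ^ 2 * b + 2 * a + 2 * a * b ^ 3 + 4 * b ^ 2 + 2 * b ^ 5,
         a ^ 3 * b + 3 * a * b ^ 2 + 3 * b ^ 4 + b ^ 7] := by
    have : F * M₄ ^ 2 = (F * M₄) * M₄ := by rw [pow_two, Matrix.mul_assoc]
    rw [this, hFM, hM₄]
    ext i j
    fin_cases i <;> fin_cases j <;>
      simp [Matrix.mul_apply, Fin.sum_univ_succ] <;> ring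
  -- rank of F is 2
  have hrankF : F.rank = 2 := by
    have hli : LinearIndependent ℂ ![(![a, 0, 1] : Fin 3 → ℂ), ![1, 0, b]] := by
      rw [LinearIndependent.pair_iff]
      intro s t hst
      have h0 := congrFun hst 0
      have h2 := congrFun hst 2
      simp [Pi.add_apply, Pi.smul_apply, smul_eq_mul] at h0 h2
      -- h0 : s * a + t = 0, h2 : s + t * b = 0
      have hs : s * (a * b - 1) = 0 := by linear_combination b * h0 - h2
      have hs0 : s = 0 := by
        rcases mul_eq_zero.mp hs with h | h
        · exact h
        · exact absurd h h1
      constructor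
      · exact hs0
      · have := h0; rw [hs0] at this; simpa using this
    have : F.rank = Fintype.card (Fin 2) := by
      rw [hF]
      exact LinearIndependent.rank_matrix (by exact hli)
    simpa using this
  refine ⟨hrankF, ?_, ?_, ?_⟩
  · rw [Matrix.rank_mul_eq_left_of_isUnit_det M₄ F hdet]; exact hrankF
  · rw [Matrix.rank_mul_eq_left_of_isUnit_det (M₄ ^ 2) F hdet2]; exact hrankF
  · -- the intersection is trivial
    rw [eq_bot_iff]
    rintro v ⟨⟨hv1, hv2⟩, hv3⟩
    -- from rowSpace F : second coordinate vanishes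
    have e1 : v 1 = 0 := by
      have := dot_zero_of_mem_rowSpace F 0 1 0 (by rw [hF]; simp) (by rw [hF]; simp) hv1
      simpa using this
    have e2 : v 0 * (2 * b ^ 2) + v 1 * (-(a * b * (a * b + 1))) + v 2 * (2 * a ^ 2) = 0 := by
      refine dot_zero_of_mem_rowSpace (F * M₄) _ _ _ ?_ ?_ hv2 <;>
        (rw [hFM]; simp; ring)
    have e3 : v 0 * (-2 * b ^ 5 - 2 * a * b ^ 3 + 2 * a * b ^ 6 - 2 * a ^ 2 * b
          + 2 * a ^ 3 * b ^ 2 + 2 * a ^ 3 * b ^ 5)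
        + v 1 * (2 * a * b ^ 4 + a ^ 2 * b ^ 2 - 2 * a ^ 2 * b ^ 5 + a ^ 3 * b ^ 3
          + 2 * a ^ 4 * b - a ^ 4 * b ^ 4 - 2 * a ^ 5 * b ^ 2 - a ^ 5 * b ^ 5)
        + v 2 * (-2 * a * b ^ 2 + 2 * a ^ 2 * b ^ 3 - 2 * a ^ 3 * b - 2 * a ^ 5
          + 2 * a ^ 5 * b ^ 3 + 2 * a ^ 6 * b) = 0 := by
      refine dot_zero_of_mem_rowSpace (F * M₄ ^ 2) _ _ _ ?_ ?_ hv3 <;>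
        (rw [hFM2]; simp; ring)
    rw [e1] at e2 e3
    have hD : (4 : ℂ) * a * b * (a * b - 1) ^ 2 * (a ^ 3 - b ^ 3) ≠ 0 := by
      apply mul_ne_zero
      apply mul_ne_zero
      · apply mul_ne_zero (mul_ne_zero (by norm_num) ha) hb
      · exact pow_ne_zero 2 h1
      · exact h3
    have hv0 : v 0 = 0 := by
      have key : v 0 * (4 * a * b * (a * b - 1) ^ 2 * (a ^ 3 - b ^ 3)) = 0 := by
        linear_combination (-2 * a * b ^ 2 + 2 * a ^ 2 * b ^ 3 - 2 * a ^ 3 * b - 2 * a ^ 5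
          + 2 * a ^ 5 * b ^ 3 + 2 * a ^ 6 * b) * e2 - (2 * a ^ 2) * e3
      rcases mul_eq_zero.mp key with h | h
      · exact h
      · exact absurd h hD
    have hv2' : v 2 = 0 := by
      rw [hv0] at e2
      have : v 2 * (2 * a ^ 2) = 0 := by linear_combination e2
      rcases mul_eq_zero.mp this with h | h
      · exact h
      · exact absurd h (mul_ne_zero (by norm_num) (pow_ne_zero 2 ha))
    show v ∈ (⊥ : Submodule ℂ (Fin 3 → ℂ))
    rw [Submodule.mem_bot]
    funext i
    fin_cases i
    · exact hv0
    · exact e1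
    · exact hv2'
end

section
/- Let α, β, c, d ∈ ℂ with α ≠ 0, β ≠ 0, and α^k ≠ β^k for every positive integer k. Let T be an invertible 3×3 complex matrix, let D be the 3×3 matrix [[α, 0, 0],[0, β, 0],[0, c, d]], and set M = T⁻¹DT. Let s ∈ ℂ³ be a vector such that the first and second coordinates of Ts are both nonzero. Then for every positive integer k, M^k s is not a complex scalar multiple of s. -/
open Matrix

theorem stmt_17 (α β c d : ℂ) (hα : α ≠ 0) (hβ : β ≠ 0)
    (hpow : ∀ k : ℕ, 1 ≤ k → α ^ k ≠ β ^ k)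
    (T : Matrix (Fin 3) (Fin 3) ℂ) (hT : IsUnit T)
    (D : Matrix (Fin 3) (Fin 3) ℂ) (hD : D = !![α, 0, 0; 0, β, 0; 0, c, d])
    (M : Matrix (Fin 3) (Fin 3) ℂ) (hM : M = T⁻¹ * D * T)
    (s : Fin 3 → ℂ) (hs0 : (T *ᵥ s) 0 ≠ 0) (hs1 : (T *ᵥ s) 1 ≠ 0) :
    ∀ k : ℕ, 1 ≤ k → ¬ ∃ lam : ℂ, (M ^ k) *ᵥ s = lam • s := by
  have hdet : IsUnit T.det := (Matrix.isUnit_iff_isUnit_det T).mp hT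
  have hTi : T * T⁻¹ = 1 := Matrix.mul_nonsing_inv T hdet
  have hiT : T⁻¹ * T = 1 := Matrix.nonsing_inv_mul T hdet
  have hMk : ∀ k : ℕ, M ^ k = T⁻¹ * D ^ k * T := by
    intro k
    induction k with
    | zero => simp [hiT]
    | succ n ih =>
        rw [pow_succ, pow_succ, ih, hM]
        have hTM : T * (T⁻¹ * D * T) = D * T := by
          rw [← Matrix.mul_assoc, ← Matrix.mul_assoc, hTi, Matrix.one_mul]
        rw [Matrix.mul_assoc (T⁻¹ * D ^ n), hTM, ← Matrix.mul_assoc,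
          Matrix.mul_assoc T⁻¹, Matrix.mul_assoc T⁻¹, Matrix.mul_assoc (D ^ n)]
  have h0 : ∀ (k : ℕ) (v : Fin 3 → ℂ), ((D ^ k) *ᵥ v) 0 = α ^ k * v 0 := by
    intro k
    induction k with
    | zero => intro v; simp
    | succ n ih =>
        intro v
        rw [pow_succ', ← Matrix.mulVec_mulVec]
        have := ih v
        simp [hD, Matrix.mulVec, dotProduct, Fin.sum_univ_three] at this ⊢
        rw [this]; ring
  have h1 : ∀ (k : ℕ) (v : Fin 3 → ℂ), ((D ^ k) *ᵥ v) 1 = β ^ k * v 1 := by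
    intro k
    induction k with
    | zero => intro v; simp
    | succ n ih =>
        intro v
        rw [pow_succ', ← Matrix.mulVec_mulVec]
        have := ih v
        simp [hD, Matrix.mulVec, dotProduct, Fin.sum_univ_three] at this ⊢
        rw [this]; ring
  rintro k hk ⟨lam, h⟩
  have key : (D ^ k) *ᵥ (T *ᵥ s) = lam • (T *ᵥ s) := by
    have hc := congrArg (fun v => T *ᵥ v) h
    simp only [Matrix.mulVec_smul] at hc
    have hTM : T * (T⁻¹ * D ^ k * T) = D ^ k * T := by
      rw [← Matrix.mul_assoc, ← Matrix.mul_assoc, hTi, Matrix.one_mul]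
    rw [Matrix.mulVec_mulVec, ← hTM, ← hMk k, ← Matrix.mulVec_mulVec]
    exact hc
  have e0 : α ^ k * (T *ᵥ s) 0 = lam * (T *ᵥ s) 0 := by
    rw [← h0 k, key]; rfl
  have e1 : β ^ k * (T *ᵥ s) 1 = lam * (T *ᵥ s) 1 := by
    rw [← h1 k, key]; rfl
  have hα' : α ^ k = lam := mul_right_cancel₀ hs0 e0
  have hβ' : β ^ k = lam := mul_right_cancel₀ hs1 e1
  exact hpow k hk (hα'.trans hβ'.symm)
end

section
/- Let a, b ∈ ℂ with ab ≠ 1 and a³ ≠ b³. Let F = [[a, 0, 1],[1, 0, b]], M₄ = [[a³, 2a, b],[a², ab+1, b²],[a, 2b, b³]], M₆ = [[a³+1, 0, a²+b],[a²+b, 0, a+b²],[a+b², 0, b³+1]], and s = (a, 1, b)ᵀ ∈ ℂ³. Then the three vectors Fs, F·M₄·s, and F·M₆·s in ℂ² are pairwise linearly independent; equivalently, each of the 2×2 matrices [F·M₄·s | Fs], [F·M₆·s | Fs], and [F·M₄·s | F·M₆·s] is nonsingular. -/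
open Matrix

lemma li2_aux (u v : Fin 2 → ℂ) (h : u 0 * v 1 - u 1 * v 0 ≠ 0) :
    LinearIndependent ℂ ![u, v] := by
  rw [LinearIndependent.pair_iff]
  intro p q hpq
  have h0 := congrFun hpq 0
  have h1 := congrFun hpq 1
  simp only [Pi.add_apply, Pi.smul_apply, smul_eq_mul, Pi.zero_apply] at h0 h1
  constructor
  · have hp : p * (u 0 * v 1 - u 1 * v 0) = 0 := by linear_combination v 1 * h0 - v 0 * h1
    exact (mul_eq_zero.mp hp).resolve_right h
  · have hq : q * (u 0 * v 1 - u 1 * v 0) = 0 := by linear_combination u 0 * h1 - u 1 * h0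
    exact (mul_eq_zero.mp hq).resolve_right h

theorem stmt_18 (a b : ℂ) (hab1 : a * b ≠ 1) (hab3 : a ^ 3 ≠ b ^ 3)
    (F : Matrix (Fin 2) (Fin 3) ℂ) (hF : F = !![a, 0, 1; 1, 0, b])
    (M₄ : Matrix (Fin 3) (Fin 3) ℂ)
    (hM₄ : M₄ = !![a ^ 3, 2 * a, b; a ^ 2, a * b + 1, b ^ 2; a, 2 * b, b ^ 3])
    (M₆ : Matrix (Fin 3) (Fin 3) ℂ)
    (hM₆ : M₆ = !![a ^ 3 + 1, 0, a ^ 2 + b;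
                   a ^ 2 + b, 0, a + b ^ 2;
                   a + b ^ 2, 0, b ^ 3 + 1])
    (s : Fin 3 → ℂ) (hs : s = ![a, 1, b]) :
    LinearIndependent ℂ ![F *ᵥ s, F *ᵥ (M₄ *ᵥ s)] ∧
    LinearIndependent ℂ ![F *ᵥ s, F *ᵥ (M₆ *ᵥ s)] ∧
    LinearIndependent ℂ ![F *ᵥ (M₄ *ᵥ s), F *ᵥ (M₆ *ᵥ s)] := by
  subst hF hM₄ hM₆ hs
  have h1 : a * b - 1 ≠ 0 := sub_ne_zero.mpr hab1
  have h3 : a ^ 3 - b ^ 3 ≠ 0 := sub_ne_zero.mpr hab3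
  refine ⟨li2_aux _ _ ?_, li2_aux _ _ ?_, li2_aux _ _ ?_⟩ <;>
    simp only [mulVec, dotProduct, Fin.sum_univ_succ, Fin.sum_univ_zero,
      Matrix.cons_val', Matrix.cons_val_zero, Matrix.cons_val_one, Matrix.head_cons,
      Matrix.cons_val_succ, Matrix.empty_val', Matrix.cons_val_fin_one, Matrix.head_fin_const,
      add_zero, Matrix.of_apply]
  · intro h
    apply mul_ne_zero (mul_ne_zero (neg_ne_zero.mpr h1) h1) h3
    linear_combination h
  · intro h
    apply mul_ne_zero (mul_ne_zero (neg_ne_zero.mpr h1) h1) h3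
    linear_combination h
  · intro h
    apply mul_ne_zero (mul_ne_zero (mul_ne_zero h1 h1) h1) h3
    linear_combination h
end
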